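/- arXiv:2012.12967 — 12 statements merged into one kernel-verified Lean document; each statement's English description precedes it below -/
import Mathlib

section
/- Let A be an associative unital ℂ-algebra, φ ∈ ℝ, and suppose B₁, B₂, C₁, C₂ ∈ A satisfy the deformed bosonic (bosonic-anyon) relations. Define J¹ = (1/2)(C₁B₂ + C₂B₁), J² = −(i/2)(C₁B₂ − C₂B₁), J³ = (1/2)(C₁B₁ − C₂B₂). Then these operators satisfy the su(2) commutation relations: [J¹, J²] = i·J³, [J², J³] = i·J¹, and [J³, J¹] = i·J². -/
/-- **su(2) algebra of quadratic bosonic-anyon operators.**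
In an associative unital ℂ-algebra `A`, if `B₁, B₂, C₁, C₂` satisfy the deformed
bosonic (bosonic-anyon) relations with statistical parameter `φ`, then the operators
`J¹ = (1/2)(C₁B₂ + C₂B₁)`, `J² = −(i/2)(C₁B₂ − C₂B₁)`, `J³ = (1/2)(C₁B₁ − C₂B₂)`
satisfy the su(2) commutation relations. -/
theorem bosonic_anyon_su2 (A : Type*) [Ring A] [Algebra ℂ A] (φ : ℝ) (B₁ B₂ C₁ C₂ : A)
    (h1 : B₁ * C₁ - C₁ * B₁ = 1)
    (h2 : B₂ * C₂ - C₂ * B₂ = 1)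
    (h3 : B₁ * C₂ = Complex.exp (-(Complex.I * φ)) • (C₂ * B₁))
    (h4 : B₂ * C₁ = Complex.exp (Complex.I * φ) • (C₁ * B₂))
    (h5 : B₁ * B₂ = Complex.exp (Complex.I * φ) • (B₂ * B₁))
    (h6 : C₁ * C₂ = Complex.exp (Complex.I * φ) • (C₂ * C₁))
    (J1 J2 J3 : A)
    (hJ1 : J1 = (1 / 2 : ℂ) • (C₁ * B₂ + C₂ * B₁))
    (hJ2 : J2 = (-(Complex.I / 2)) • (C₁ * B₂ - C₂ * B₁))
    (hJ3 : J3 = (1 / 2 : ℂ) • (C₁ * B₁ - C₂ * B₂)) :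
    J1 * J2 - J2 * J1 = Complex.I • J3 ∧
    J2 * J3 - J3 * J2 = Complex.I • J1 ∧
    J3 * J1 - J1 * J3 = Complex.I • J2 := by
  set a : ℂ := Complex.exp (Complex.I * φ) with ha
  set b : ℂ := Complex.exp (-(Complex.I * φ)) with hb
  have hab : a * b = 1 := by
    rw [ha, hb, ← Complex.exp_add, add_neg_cancel, Complex.exp_zero]
  have hba : b * a = 1 := by rw [mul_comm]; exact hab
  have e1 : B₁ * C₁ = 1 + C₁ * B₁ := eq_add_of_sub_eq h1
  have e2 : B₂ * C₂ = 1 + C₂ * B₂ := eq_add_of_sub_eq h2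
  have hB21 : B₂ * B₁ = b • (B₁ * B₂) := by
    rw [h5, smul_smul, hba, one_smul]
  -- K = C₁*B₂, L = C₂*B₁, M = C₁*B₁, N = C₂*B₂
  have hKL : (C₁*B₂) * (C₂*B₁) = (C₂*C₁) * (B₁*B₂) + C₁*B₁ := by
    calc (C₁*B₂) * (C₂*B₁) = C₁ * ((B₂*C₂) * B₁) := by noncomm_ring
      _ = C₁ * ((1 + C₂*B₂) * B₁) := by rw [e2]
      _ = (C₁*C₂) * (B₂*B₁) + C₁*B₁ := by noncomm_ring
      _ = (a • (C₂*C₁)) * (b • (B₁*B₂)) + C₁*B₁ := by rw [h6, hB21]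
      _ = (a*b) • ((C₂*C₁) * (B₁*B₂)) + C₁*B₁ := by
            rw [smul_mul_assoc, mul_smul_comm, smul_smul]
      _ = (C₂*C₁) * (B₁*B₂) + C₁*B₁ := by rw [hab, one_smul]
  have hLK : (C₂*B₁) * (C₁*B₂) = (C₂*C₁) * (B₁*B₂) + C₂*B₂ := by
    calc (C₂*B₁) * (C₁*B₂) = C₂ * ((B₁*C₁) * B₂) := by noncomm_ring
      _ = C₂ * ((1 + C₁*B₁) * B₂) := by rw [e1]
      _ = (C₂*C₁) * (B₁*B₂) + C₂*B₂ := by noncomm_ring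
  have hcKL : (C₁*B₂) * (C₂*B₁) = (C₂*B₁) * (C₁*B₂) + (C₁*B₁ - C₂*B₂) := by
    rw [hKL, hLK]; abel
  have hKM : (C₁*B₂) * (C₁*B₁) = (C₁*C₁) * (B₁*B₂) := by
    calc (C₁*B₂) * (C₁*B₁) = C₁ * ((B₂*C₁) * B₁) := by noncomm_ring
      _ = C₁ * ((a • (C₁*B₂)) * B₁) := by rw [h4]
      _ = a • (C₁ * ((C₁*B₂) * B₁)) := by rw [smul_mul_assoc, mul_smul_comm]
      _ = a • ((C₁*C₁) * (B₂*B₁)) := by rw [show C₁ * ((C₁*B₂) * B₁) = (C₁*C₁) * (B₂*B₁) from by noncomm_ring]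
      _ = a • ((C₁*C₁) * (b • (B₁*B₂))) := by rw [hB21]
      _ = (a*b) • ((C₁*C₁) * (B₁*B₂)) := by rw [mul_smul_comm, smul_smul]
      _ = (C₁*C₁) * (B₁*B₂) := by rw [hab, one_smul]
  have hMK : (C₁*B₁) * (C₁*B₂) = (C₁*C₁) * (B₁*B₂) + C₁*B₂ := by
    calc (C₁*B₁) * (C₁*B₂) = C₁ * ((B₁*C₁) * B₂) := by noncomm_ring
      _ = C₁ * ((1 + C₁*B₁) * B₂) := by rw [e1]
      _ = (C₁*C₁) * (B₁*B₂) + C₁*B₂ := by noncomm_ring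
  have hcKM : (C₁*B₂) * (C₁*B₁) = (C₁*B₁) * (C₁*B₂) - C₁*B₂ := by
    rw [hKM, hMK]; abel
  have hKN : (C₁*B₂) * (C₂*B₂) = a • ((C₂*C₁) * (B₂*B₂)) + C₁*B₂ := by
    calc (C₁*B₂) * (C₂*B₂) = C₁ * ((B₂*C₂) * B₂) := by noncomm_ring
      _ = C₁ * ((1 + C₂*B₂) * B₂) := by rw [e2]
      _ = (C₁*C₂) * (B₂*B₂) + C₁*B₂ := by noncomm_ring
      _ = (a • (C₂*C₁)) * (B₂*B₂) + C₁*B₂ := by rw [h6]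
      _ = a • ((C₂*C₁) * (B₂*B₂)) + C₁*B₂ := by rw [smul_mul_assoc]
  have hNK : (C₂*B₂) * (C₁*B₂) = a • ((C₂*C₁) * (B₂*B₂)) := by
    calc (C₂*B₂) * (C₁*B₂) = C₂ * ((B₂*C₁) * B₂) := by noncomm_ring
      _ = C₂ * ((a • (C₁*B₂)) * B₂) := by rw [h4]
      _ = a • (C₂ * ((C₁*B₂) * B₂)) := by rw [smul_mul_assoc, mul_smul_comm]
      _ = a • ((C₂*C₁) * (B₂*B₂)) := by rw [show C₂ * ((C₁*B₂) * B₂) = (C₂*C₁) * (B₂*B₂) from by noncomm_ring]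
  have hcKN : (C₁*B₂) * (C₂*B₂) = (C₂*B₂) * (C₁*B₂) + C₁*B₂ := by
    rw [hKN, hNK]
  have hLM : (C₂*B₁) * (C₁*B₁) = (C₂*C₁) * (B₁*B₁) + C₂*B₁ := by
    calc (C₂*B₁) * (C₁*B₁) = C₂ * ((B₁*C₁) * B₁) := by noncomm_ring
      _ = C₂ * ((1 + C₁*B₁) * B₁) := by rw [e1]
      _ = (C₂*C₁) * (B₁*B₁) + C₂*B₁ := by noncomm_ring
  have hML : (C₁*B₁) * (C₂*B₁) = (C₂*C₁) * (B₁*B₁) := by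
    calc (C₁*B₁) * (C₂*B₁) = C₁ * ((B₁*C₂) * B₁) := by noncomm_ring
      _ = C₁ * ((b • (C₂*B₁)) * B₁) := by rw [h3]
      _ = b • (C₁ * ((C₂*B₁) * B₁)) := by rw [smul_mul_assoc, mul_smul_comm]
      _ = b • ((C₁*C₂) * (B₁*B₁)) := by rw [show C₁ * ((C₂*B₁) * B₁) = (C₁*C₂) * (B₁*B₁) from by noncomm_ring]
      _ = b • ((a • (C₂*C₁)) * (B₁*B₁)) := by rw [h6]
      _ = (b*a) • ((C₂*C₁) * (B₁*B₁)) := by rw [smul_mul_assoc, smul_smul]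
      _ = (C₂*C₁) * (B₁*B₁) := by rw [hba, one_smul]
  have hcLM : (C₂*B₁) * (C₁*B₁) = (C₁*B₁) * (C₂*B₁) + C₂*B₁ := by
    rw [hLM, hML]
  have hLN : (C₂*B₁) * (C₂*B₂) = b • ((C₂*C₂) * (B₁*B₂)) := by
    calc (C₂*B₁) * (C₂*B₂) = C₂ * ((B₁*C₂) * B₂) := by noncomm_ring
      _ = C₂ * ((b • (C₂*B₁)) * B₂) := by rw [h3]
      _ = b • (C₂ * ((C₂*B₁) * B₂)) := by rw [smul_mul_assoc, mul_smul_comm]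
      _ = b • ((C₂*C₂) * (B₁*B₂)) := by rw [show C₂ * ((C₂*B₁) * B₂) = (C₂*C₂) * (B₁*B₂) from by noncomm_ring]
  have hNL : (C₂*B₂) * (C₂*B₁) = b • ((C₂*C₂) * (B₁*B₂)) + C₂*B₁ := by
    calc (C₂*B₂) * (C₂*B₁) = C₂ * ((B₂*C₂) * B₁) := by noncomm_ring
      _ = C₂ * ((1 + C₂*B₂) * B₁) := by rw [e2]
      _ = (C₂*C₂) * (B₂*B₁) + C₂*B₁ := by noncomm_ring
      _ = (C₂*C₂) * (b • (B₁*B₂)) + C₂*B₁ := by rw [hB21]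
      _ = b • ((C₂*C₂) * (B₁*B₂)) + C₂*B₁ := by rw [mul_smul_comm]
  have hcNL : (C₂*B₂) * (C₂*B₁) = (C₂*B₁) * (C₂*B₂) + C₂*B₁ := by
    rw [hLN, hNL]
  subst hJ1 hJ2 hJ3
  set K := C₁*B₂
  set L := C₂*B₁
  set M := C₁*B₁
  set N := C₂*B₂
  refine ⟨?_, ?_, ?_⟩
  · rw [show ((1/2 : ℂ) • (K + L)) * ((-(Complex.I/2)) • (K - L)) =
        ((1/2 : ℂ) * (-(Complex.I/2))) • ((K+L) * (K-L)) from by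
          rw [smul_mul_assoc, mul_smul_comm, smul_smul],
      show ((-(Complex.I/2)) • (K - L)) * ((1/2 : ℂ) • (K + L)) =
        ((-(Complex.I/2)) * (1/2 : ℂ)) • ((K-L) * (K+L)) from by
          rw [smul_mul_assoc, mul_smul_comm, smul_smul],
      show (K+L) * (K-L) = K*K - K*L + (L*K - L*L) from by noncomm_ring,
      show (K-L) * (K+L) = K*K + K*L - (L*K + L*L) from by noncomm_ring,
      hcKL]
    match_scalars <;> first
      | ring1
      | linear_combination ((1:ℂ)/2) * Complex.I_sq
      | linear_combination (-(1:ℂ)/2) * Complex.I_sq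
  · rw [show ((-(Complex.I/2)) • (K - L)) * ((1/2 : ℂ) • (M - N)) =
        ((-(Complex.I/2)) * (1/2 : ℂ)) • ((K-L) * (M-N)) from by
          rw [smul_mul_assoc, mul_smul_comm, smul_smul],
      show ((1/2 : ℂ) • (M - N)) * ((-(Complex.I/2)) • (K - L)) =
        ((1/2 : ℂ) * (-(Complex.I/2))) • ((M-N) * (K-L)) from by
          rw [smul_mul_assoc, mul_smul_comm, smul_smul],
      show (K-L) * (M-N) = K*M - K*N - (L*M - L*N) from by noncomm_ring,
      show (M-N) * (K-L) = M*K - M*L - (N*K - N*L) from by noncomm_ring,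
      hcKM, hcKN, hcLM, hcNL]
    match_scalars <;> first
      | ring1
      | linear_combination ((1:ℂ)/2) * Complex.I_sq
      | linear_combination (-(1:ℂ)/2) * Complex.I_sq
  · rw [show ((1/2 : ℂ) • (M - N)) * ((1/2 : ℂ) • (K + L)) =
        ((1/2 : ℂ) * (1/2 : ℂ)) • ((M-N) * (K+L)) from by
          rw [smul_mul_assoc, mul_smul_comm, smul_smul],
      show ((1/2 : ℂ) • (K + L)) * ((1/2 : ℂ) • (M - N)) =
        ((1/2 : ℂ) * (1/2 : ℂ)) • ((K+L) * (M-N)) from by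
          rw [smul_mul_assoc, mul_smul_comm, smul_smul],
      show (M-N) * (K+L) = M*K + M*L - (N*K + N*L) from by noncomm_ring,
      show (K+L) * (M-N) = K*M - K*N + (L*M - L*N) from by noncomm_ring,
      hcKM, hcKN, hcLM, hcNL]
    match_scalars <;> first
      | ring1
      | linear_combination ((1:ℂ)/2) * Complex.I_sq
      | linear_combination (-(1:ℂ)/2) * Complex.I_sq
end

section
/- Let A be an associative unital ℂ-algebra, φ ∈ ℝ, and suppose B₁, B₂, C₁, C₂ ∈ A satisfy the deformed fermionic (fermionic-anyon) relations. Define J¹ = (1/2)(C₁B₂ + C₂B₁), J² = −(i/2)(C₁B₂ − C₂B₁), J³ = (1/2)(C₁B₁ − C₂B₂). Then these operators satisfy the su(2) commutation relations: [J¹, J²] = i·J³, [J², J³] = i·J¹, and [J³, J¹] = i·J². -/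
/-- **su(2) algebra of quadratic fermionic-anyon operators.**
In an associative unital ℂ-algebra `A`, if `B₁, B₂, C₁, C₂` satisfy the deformed
fermionic (fermionic-anyon) relations with statistical parameter `φ`, then the operators
`J¹ = (1/2)(C₁B₂ + C₂B₁)`, `J² = −(i/2)(C₁B₂ − C₂B₁)`, `J³ = (1/2)(C₁B₁ − C₂B₂)`
satisfy the su(2) commutation relations. -/
theorem fermionic_anyon_su2 (A : Type*) [Ring A] [Algebra ℂ A] (φ : ℝ) (B₁ B₂ C₁ C₂ : A)
    (h1 : B₁ * C₁ + C₁ * B₁ = 1)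
    (h2 : B₂ * C₂ + C₂ * B₂ = 1)
    (hB1 : B₁ * B₁ = 0) (hB2 : B₂ * B₂ = 0) (hC1 : C₁ * C₁ = 0) (hC2 : C₂ * C₂ = 0)
    (h3 : B₁ * C₂ = -(Complex.exp (-(Complex.I * φ)) • (C₂ * B₁)))
    (h4 : B₂ * C₁ = -(Complex.exp (Complex.I * φ) • (C₁ * B₂)))
    (h5 : B₁ * B₂ = -(Complex.exp (Complex.I * φ) • (B₂ * B₁)))
    (h6 : C₁ * C₂ = -(Complex.exp (Complex.I * φ) • (C₂ * C₁)))
    (J1 J2 J3 : A)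
    (hJ1 : J1 = (1 / 2 : ℂ) • (C₁ * B₂ + C₂ * B₁))
    (hJ2 : J2 = (-(Complex.I / 2)) • (C₁ * B₂ - C₂ * B₁))
    (hJ3 : J3 = (1 / 2 : ℂ) • (C₁ * B₁ - C₂ * B₂)) :
    J1 * J2 - J2 * J1 = Complex.I • J3 ∧
    J2 * J3 - J3 * J2 = Complex.I • J1 ∧
    J3 * J1 - J1 * J3 = Complex.I • J2 := by
  have hb1c1 : B₁ * C₁ = 1 - C₁ * B₁ := eq_sub_of_add_eq h1
  have hb2c2 : B₂ * C₂ = 1 - C₂ * B₂ := eq_sub_of_add_eq h2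
  -- squares vanish
  have hXX : (C₁ * B₂) * (C₁ * B₂) = 0 := by
    have : (C₁ * B₂) * (C₁ * B₂) = C₁ * (B₂ * C₁) * B₂ := by noncomm_ring
    rw [this, h4]
    simp only [mul_neg, neg_mul, mul_smul_comm, smul_mul_assoc]
    rw [show C₁ * (C₁ * B₂) * B₂ = (C₁ * C₁) * (B₂ * B₂) by noncomm_ring, hC1]
    simp
  have hYY : (C₂ * B₁) * (C₂ * B₁) = 0 := by
    have : (C₂ * B₁) * (C₂ * B₁) = C₂ * (B₁ * C₂) * B₁ := by noncomm_ring
    rw [this, h3]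
    simp only [mul_neg, neg_mul, mul_smul_comm, smul_mul_assoc]
    rw [show C₂ * (C₂ * B₁) * B₁ = (C₂ * C₂) * (B₁ * B₁) by noncomm_ring, hC2]
    simp
  -- cross term equality
  have hcross : (C₁ * C₂) * (B₂ * B₁) = (C₂ * C₁) * (B₁ * B₂) := by
    rw [h6, h5]
    simp only [neg_mul, mul_neg, smul_mul_assoc, mul_smul_comm, neg_neg]
  -- XY and YX
  have hXY : (C₁ * B₂) * (C₂ * B₁) = C₁ * B₁ - (C₁ * C₂) * (B₂ * B₁) := by
    have : (C₁ * B₂) * (C₂ * B₁) = C₁ * (B₂ * C₂) * B₁ := by noncomm_ring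
    rw [this, hb2c2]; noncomm_ring
  have hYX : (C₂ * B₁) * (C₁ * B₂) = C₂ * B₂ - (C₂ * C₁) * (B₁ * B₂) := by
    have : (C₂ * B₁) * (C₁ * B₂) = C₂ * (B₁ * C₁) * B₂ := by noncomm_ring
    rw [this, hb1c1]; noncomm_ring
  -- products with number operators
  have hN1X : (C₁ * B₁) * (C₁ * B₂) = C₁ * B₂ := by
    have : (C₁ * B₁) * (C₁ * B₂) = C₁ * (B₁ * C₁) * B₂ := by noncomm_ring
    rw [this, hb1c1]
    rw [show C₁ * (1 - C₁ * B₁) * B₂ = C₁ * B₂ - (C₁ * C₁) * (B₁ * B₂) by noncomm_ring, hC1]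
    simp
  have hXN1 : (C₁ * B₂) * (C₁ * B₁) = 0 := by
    have : (C₁ * B₂) * (C₁ * B₁) = C₁ * (B₂ * C₁) * B₁ := by noncomm_ring
    rw [this, h4]
    simp only [mul_neg, neg_mul, mul_smul_comm, smul_mul_assoc]
    rw [show C₁ * (C₁ * B₂) * B₁ = (C₁ * C₁) * (B₂ * B₁) by noncomm_ring, hC1]
    simp
  have hXN2 : (C₁ * B₂) * (C₂ * B₂) = C₁ * B₂ := by
    have : (C₁ * B₂) * (C₂ * B₂) = C₁ * (B₂ * C₂) * B₂ := by noncomm_ring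
    rw [this, hb2c2]
    rw [show C₁ * (1 - C₂ * B₂) * B₂ = C₁ * B₂ - (C₁ * C₂) * (B₂ * B₂) by noncomm_ring, hB2]
    simp
  have hN2X : (C₂ * B₂) * (C₁ * B₂) = 0 := by
    have : (C₂ * B₂) * (C₁ * B₂) = C₂ * (B₂ * C₁) * B₂ := by noncomm_ring
    rw [this, h4]
    simp only [mul_neg, neg_mul, mul_smul_comm, smul_mul_assoc]
    rw [show C₂ * (C₁ * B₂) * B₂ = (C₂ * C₁) * (B₂ * B₂) by noncomm_ring, hB2]
    simp
  have hYN1 : (C₂ * B₁) * (C₁ * B₁) = C₂ * B₁ := by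
    have : (C₂ * B₁) * (C₁ * B₁) = C₂ * (B₁ * C₁) * B₁ := by noncomm_ring
    rw [this, hb1c1]
    rw [show C₂ * (1 - C₁ * B₁) * B₁ = C₂ * B₁ - (C₂ * C₁) * (B₁ * B₁) by noncomm_ring, hB1]
    simp
  have hN1Y : (C₁ * B₁) * (C₂ * B₁) = 0 := by
    have : (C₁ * B₁) * (C₂ * B₁) = C₁ * (B₁ * C₂) * B₁ := by noncomm_ring
    rw [this, h3]
    simp only [mul_neg, neg_mul, mul_smul_comm, smul_mul_assoc]
    rw [show C₁ * (C₂ * B₁) * B₁ = (C₁ * C₂) * (B₁ * B₁) by noncomm_ring, hB1]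
    simp
  have hYN2 : (C₂ * B₁) * (C₂ * B₂) = 0 := by
    have : (C₂ * B₁) * (C₂ * B₂) = C₂ * (B₁ * C₂) * B₂ := by noncomm_ring
    rw [this, h3]
    simp only [mul_neg, neg_mul, mul_smul_comm, smul_mul_assoc]
    rw [show C₂ * (C₂ * B₁) * B₂ = (C₂ * C₂) * (B₁ * B₂) by noncomm_ring, hC2]
    simp
  have hN2Y : (C₂ * B₂) * (C₂ * B₁) = C₂ * B₁ := by
    have : (C₂ * B₂) * (C₂ * B₁) = C₂ * (B₂ * C₂) * B₁ := by noncomm_ring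
    rw [this, hb2c2]
    rw [show C₂ * (1 - C₂ * B₂) * B₁ = C₂ * B₁ - (C₂ * C₂) * (B₂ * B₁) by noncomm_ring, hC2]
    simp
  subst hJ1 hJ2 hJ3
  refine ⟨?_, ?_, ?_⟩
  · simp only [smul_mul_assoc, mul_smul_comm, smul_smul, mul_add, add_mul, mul_sub, sub_mul,
      hXX, hYY, hXY, hYX]
    rw [hcross]
    match_scalars <;> (try ring) <;> (rw [Complex.I_sq]; ring)
  · simp only [smul_mul_assoc, mul_smul_comm, smul_smul, mul_add, add_mul, mul_sub, sub_mul,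
      hN1X, hXN1, hXN2, hN2X, hYN1, hN1Y, hYN2, hN2Y]
    match_scalars <;> (try ring) <;> (rw [Complex.I_sq]; ring)
  · simp only [smul_mul_assoc, mul_smul_comm, smul_smul, mul_add, add_mul, mul_sub, sub_mul,
      hN1X, hXN1, hXN2, hN2X, hYN1, hN1Y, hYN2, hN2Y]
    match_scalars <;> (try ring) <;> (rw [Complex.I_sq]; ring)
end

section
/- Let A be an associative unital ℂ-algebra, φ ∈ ℝ, and suppose B₁, B₂, C₁, C₂ ∈ A satisfy the deformed bosonic (bosonic-anyon) relations. Define J¹ = (1/2)(C₁B₂ + C₂B₁) and J² = −(i/2)(C₁B₂ − C₂B₁). Then the following recursion (commutation) identities hold: (2J¹)·C₁ = C₁·[2(cos φ · J¹ − sin φ · J²)] + C₂, and (2J¹)·C₂ = C₂·[2(cos φ · J¹ − sin φ · J²)] + C₁. -/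
/-- **Recursion (commutation) identities for the bosonic-anyon beam-splitter Hamiltonian.**
In an associative unital ℂ-algebra `A`, if `B₁, B₂, C₁, C₂` satisfy the deformed bosonic
(bosonic-anyon) relations with statistical parameter `φ`, and
`J¹ = (1/2)(C₁B₂ + C₂B₁)`, `J² = −(i/2)(C₁B₂ − C₂B₁)`, then
`(2J¹)·C₁ = C₁·[2(cos φ·J¹ − sin φ·J²)] + C₂` and
`(2J¹)·C₂ = C₂·[2(cos φ·J¹ − sin φ·J²)] + C₁`. -/
theorem bosonic_anyon_bs_recursion (A : Type*) [Ring A] [Algebra ℂ A] (φ : ℝ)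
    (B₁ B₂ C₁ C₂ : A)
    (h1 : B₁ * C₁ - C₁ * B₁ = 1)
    (h2 : B₂ * C₂ - C₂ * B₂ = 1)
    (h3 : B₁ * C₂ = Complex.exp (-(Complex.I * φ)) • (C₂ * B₁))
    (h4 : B₂ * C₁ = Complex.exp (Complex.I * φ) • (C₁ * B₂))
    (h5 : B₁ * B₂ = Complex.exp (Complex.I * φ) • (B₂ * B₁))
    (h6 : C₁ * C₂ = Complex.exp (Complex.I * φ) • (C₂ * C₁))
    (J1 J2 : A)
    (hJ1 : J1 = (1 / 2 : ℂ) • (C₁ * B₂ + C₂ * B₁))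
    (hJ2 : J2 = (-(Complex.I / 2)) • (C₁ * B₂ - C₂ * B₁)) :
    ((2 : ℂ) • J1) * C₁
      = C₁ * ((2 : ℂ) • (((Real.cos φ : ℂ)) • J1 - ((Real.sin φ : ℂ)) • J2)) + C₂ ∧
    ((2 : ℂ) • J1) * C₂
      = C₂ * ((2 : ℂ) • (((Real.cos φ : ℂ)) • J1 - ((Real.sin φ : ℂ)) • J2)) + C₁ := by
  subst hJ1 hJ2
  set e := Complex.exp (Complex.I * φ) with hedef
  set f := Complex.exp (-(Complex.I * φ)) with hfdef
  have hef : e * f = 1 := by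
    rw [hedef, hfdef, ← Complex.exp_add]; simp
  have hfe : f * e = 1 := by rw [mul_comm]; exact hef
  have he : e = (Real.cos φ : ℂ) + (Real.sin φ : ℂ) * Complex.I := by
    rw [hedef, mul_comm, Complex.exp_mul_I, Complex.ofReal_cos, Complex.ofReal_sin]
  have hf : f = (Real.cos φ : ℂ) - (Real.sin φ : ℂ) * Complex.I := by
    rw [hfdef]
    have h : -(Complex.I * (φ:ℂ)) = ((-φ : ℝ) : ℂ) * Complex.I := by push_cast; ring
    rw [h, Complex.exp_mul_I]
    push_cast
    rw [Complex.cos_neg, Complex.sin_neg, ← Complex.ofReal_cos, ← Complex.ofReal_sin]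
    ring
  have hL : (2 : ℂ) • ((1 / 2 : ℂ) • (C₁ * B₂ + C₂ * B₁)) = C₁ * B₂ + C₂ * B₁ := by
    rw [smul_smul]; norm_num
  have hR : (2 : ℂ) • (((Real.cos φ : ℂ)) • ((1 / 2 : ℂ) • (C₁ * B₂ + C₂ * B₁))
        - ((Real.sin φ : ℂ)) • ((-(Complex.I / 2)) • (C₁ * B₂ - C₂ * B₁)))
      = e • (C₁ * B₂) + f • (C₂ * B₁) := by
    rw [he, hf]; match_scalars <;> ring
  have hb1c1 : B₁ * C₁ = C₁ * B₁ + 1 := by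
    rw [sub_eq_iff_eq_add] at h1; rw [h1, add_comm]
  have hb2c2 : B₂ * C₂ = C₂ * B₂ + 1 := by
    rw [sub_eq_iff_eq_add] at h2; rw [h2, add_comm]
  have k6 : C₁ * (C₂ * B₁) = e • (C₂ * (C₁ * B₁)) := by
    rw [← mul_assoc, h6, smul_mul_assoc, mul_assoc]
  have k6' : C₁ * (C₂ * B₂) = e • (C₂ * (C₁ * B₂)) := by
    rw [← mul_assoc, h6, smul_mul_assoc, mul_assoc]
  rw [hL, hR]
  constructor
  · calc (C₁ * B₂ + C₂ * B₁) * C₁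
        = C₁ * (B₂ * C₁) + C₂ * (B₁ * C₁) := by noncomm_ring
      _ = e • (C₁ * (C₁ * B₂)) + (C₂ * (C₁ * B₁) + C₂) := by
          rw [h4, hb1c1, mul_smul_comm, mul_add, mul_one]
      _ = C₁ * (e • (C₁ * B₂) + f • (C₂ * B₁)) + C₂ := by
          rw [mul_add, mul_smul_comm, mul_smul_comm, k6, smul_smul, hfe, one_smul]
          abel
  · calc (C₁ * B₂ + C₂ * B₁) * C₂
        = C₁ * (B₂ * C₂) + C₂ * (B₁ * C₂) := by noncomm_ring
      _ = (C₁ * (C₂ * B₂) + C₁) + f • (C₂ * (C₂ * B₁)) := by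
          rw [h3, hb2c2, mul_smul_comm, mul_add, mul_one]
      _ = C₂ * (e • (C₁ * B₂) + f • (C₂ * B₁)) + C₁ := by
          rw [k6', mul_add, mul_smul_comm, mul_smul_comm]
          abel
end

section
/- Let A be an associative unital ℂ-algebra, φ ∈ ℝ, and let X, Y ∈ A satisfy the q-commutation relation XY = e^{iφ}·YX. Then for all a, b ∈ ℂ and all n ∈ ℕ, the ordered product ∏_{k=0}^{n−1} (e^{ikφ}·aX + bY), taken with the factor index k increasing from left to right, equals ∑_{l=0}^{n} C(n,l)·e^{iφ·l(l−1)/2}·(aX)^l·(bY)^{n−l}, where C(n,l) is the ordinary binomial coefficient. -/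
open scoped BigOperators

private lemma tri (l : ℕ) : l * (l - 1) / 2 + l = (l + 1) * l / 2 := by
  cases l with
  | zero => rfl
  | succ m =>
    obtain ⟨c, hc⟩ := Nat.even_mul_succ_self m
    have hA : (m + 1) * m = 2 * c := by rw [mul_comm]; omega
    have hB : (m + 1 + 1) * (m + 1) = 2 * c + 2 * (m + 1) := by nlinarith [hA]
    simp only [Nat.succ_sub_one, hA, hB]
    omega

private lemma key1 {A : Type*} [Ring A] [Algebra ℂ A] (q : ℂ) (X Y : A)
    (h : X * Y = q • (Y * X)) : ∀ m : ℕ, q ^ m • (Y ^ m * X) = X * Y ^ m := by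
  intro m
  induction m with
  | zero => simp
  | succ m ih =>
    rw [pow_succ' Y m, mul_assoc, pow_succ' q m, mul_smul, ← mul_smul_comm, ih,
      ← mul_assoc, ← smul_mul_assoc, ← h, mul_assoc, ← pow_succ']

private lemma key2 {A : Type*} [Ring A] [Algebra ℂ A] (q : ℂ) (X Y : A)
    (h : X * Y = q • (Y * X)) (a b : ℂ) (m : ℕ) :
    q ^ m • ((b • Y) ^ m * (a • X)) = (a • X) * (b • Y) ^ m := by
  rw [smul_pow]
  simp only [smul_mul_assoc, mul_smul_comm, smul_smul]
  rw [← key1 q X Y h m, smul_smul,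
    show q ^ m * (a * b ^ m) = b ^ m * a * q ^ m from by ring]

private lemma qbinom {A : Type*} [Ring A] [Algebra ℂ A] (q : ℂ) (X Y : A)
    (h : X * Y = q • (Y * X)) (a b : ℂ) (n : ℕ) :
    ((List.range n).map (fun k => (q ^ k * a) • X + b • Y)).prod
      = ∑ l ∈ Finset.range (n + 1),
          ((n.choose l : ℂ) * q ^ (l * (l - 1) / 2)) •
            ((a • X) ^ l * (b • Y) ^ (n - l)) := by
  induction n with
  | zero => simp
  | succ n ih =>
    rw [List.range_succ, List.map_append, List.prod_append, List.map_singleton,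
      List.prod_singleton, ih, Finset.sum_mul]
    have step : ∀ l ∈ Finset.range (n + 1),
        (((n.choose l : ℂ) * q ^ (l * (l - 1) / 2)) • ((a • X) ^ l * (b • Y) ^ (n - l))) *
          ((q ^ n * a) • X + b • Y)
        = ((n.choose l : ℂ) * q ^ ((l + 1) * l / 2)) • ((a • X) ^ (l + 1) * (b • Y) ^ (n - l))
          + ((n.choose l : ℂ) * q ^ (l * (l - 1) / 2)) •
              ((a • X) ^ l * (b • Y) ^ (n + 1 - l)) := by
      intro l hl
      have hln : l ≤ n := Nat.lt_succ_iff.mp (Finset.mem_range.mp hl)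
      rw [mul_add]
      congr 1
      · rw [pow_succ, mul_assoc, ← key2 q X Y h a b (n - l)]
        simp only [smul_pow, smul_mul_assoc, mul_smul_comm, smul_smul]
        congr 1
        · have h1 := tri l
          have he : l * (l - 1) / 2 + n = (l + 1) * l / 2 + (n - l) := by
            generalize l * (l - 1) / 2 = s at h1 ⊢
            generalize (l + 1) * l / 2 = t at h1 ⊢
            omega
          have hqq : q ^ (l * (l - 1) / 2) * q ^ n = q ^ ((l + 1) * l / 2) * q ^ (n - l) := by
            rw [← pow_add, ← pow_add, he]
          linear_combination (↑(n.choose l) * a ^ l * b ^ (n - l) * a) * hqq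
        · rw [mul_assoc]
      · rw [smul_mul_assoc, mul_assoc, ← pow_succ, Nat.succ_sub hln]
    rw [Finset.sum_congr rfl step, Finset.sum_add_distrib,
      Finset.sum_range_succ' _ (n + 1)]
    simp only [Nat.add_sub_cancel, Nat.succ_sub_succ, Nat.succ_sub_one,
      Nat.choose_succ_succ, Nat.cast_add, add_mul, add_smul, Finset.sum_add_distrib]
    rw [add_assoc]
    congr 1
    rw [Finset.sum_range_succ' _ n, Finset.sum_range_succ]
    simp only [Nat.choose_succ_self, Nat.cast_zero, zero_mul, zero_smul, add_zero,
      Nat.succ_sub_succ, Nat.succ_sub_one, Nat.sub_zero, Nat.choose_zero_right,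
      Nat.cast_one, one_mul, pow_zero, Nat.zero_sub, Nat.zero_mul, Nat.mul_one]
    simp only [Nat.succ_eq_add_one, add_mul, one_mul]

/-- **Generalized (q-)binomial identity for anyonic creation operators.**
If `X, Y` in an associative unital ℂ-algebra satisfy `XY = e^{iφ}·YX`, then for all
`a, b ∈ ℂ` and `n ∈ ℕ`, the ordered product `∏_{k=0}^{n−1} (e^{ikφ}·aX + bY)` (factor
index increasing from left to right) equals
`∑_{l=0}^{n} C(n,l)·e^{iφ·l(l−1)/2}·(aX)^l·(bY)^{n−l}`. -/

theorem anyonic_binomial_identity (A : Type*) [Ring A] [Algebra ℂ A] (φ : ℝ) (X Y : A)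
    (h : X * Y = Complex.exp (Complex.I * φ) • (Y * X)) (a b : ℂ) (n : ℕ) :
    ((List.range n).map
        (fun k => (Complex.exp (Complex.I * φ * k) * a) • X + b • Y)).prod
      = ∑ l ∈ Finset.range (n + 1),
          ((n.choose l : ℂ) * Complex.exp (Complex.I * φ * (l * (l - 1) / 2 : ℕ))) •
            ((a • X) ^ l * (b • Y) ^ (n - l)) := by
  have hq : ∀ k : ℕ, Complex.exp (Complex.I * φ * k) = Complex.exp (Complex.I * φ) ^ k := by
    intro k
    rw [mul_comm, Complex.exp_nat_mul]
  have hf : ((fun k : ℂ => (Complex.exp (Complex.I * φ * k) * a) • X + b • Y) ∘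
        (Nat.cast : ℕ → ℂ))
      = fun k : ℕ => (Complex.exp (Complex.I * φ) ^ k * a) • X + b • Y := by
    funext k; simp only [Function.comp_apply]; rw [hq]
  have hl : (do let a ← List.range n; pure ((a : ℕ) : ℂ)) = (List.range n).map Nat.cast := by
    induction n with
    | zero => rfl
    | succ m ihm => rw [List.range_succ]; simp_all
  rw [hl, List.map_map]
  rw [hf]
  rw [Finset.sum_congr rfl fun l _ => by rw [hq (l * (l - 1) / 2)]]
  exact qbinom _ X Y h a b n
end

section
/- Let A be an associative unital ℂ-algebra, φ ∈ ℝ, and let X, Y ∈ A satisfy the q-commutation relation XY = e^{iφ}·YX. Then for all a, b ∈ ℂ and all n ∈ ℕ, the ordered product ∏_{k=0}^{n−1} (aX + e^{−ikφ}·bY), taken with the factor index k increasing from left to right, equals ∑_{l=0}^{n} C(n,l)·e^{−iφ·( l(n−l) + (n−l)(n−l−1)/2 )}·(aX)^l·(bY)^{n−l}, where C(n,l) is the ordinary binomial coefficient. (These are the coefficients c¹_{l,k} = e^{−iφ(lk + k(k−1)/2)} with k = n−l that govern the beam-splitter evolution of a bosonic-anyon coherent state.) -/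
open scoped BigOperators



-- natural-number exponent combinatorics
def Efun (n l : ℕ) : ℕ := l * (n - l) + (n - l).choose 2

lemma choose_two_succ (k : ℕ) : (k+1).choose 2 = k.choose 2 + k := by
  have := Nat.choose_succ_succ k 1; simp [Nat.choose_one_right] at this; omega

lemma E1 (n l : ℕ) (hl : l ≤ n) : Efun (n+1) (l+1) = Efun n l + (n - l) := by
  obtain ⟨k, rfl⟩ := Nat.exists_eq_add_of_le hl
  unfold Efun
  have h1 : l + k + 1 - (l + 1) = k := by omega
  have h2 : l + k - l = k := by omega
  rw [h1, h2]; ring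

lemma E2 (n l : ℕ) (hl : l ≤ n) : Efun (n+1) l = Efun n l + n := by
  obtain ⟨k, rfl⟩ := Nat.exists_eq_add_of_le hl
  unfold Efun
  have h1 : l + k + 1 - l = k + 1 := by omega
  have h2 : l + k - l = k := by omega
  rw [h1, h2, choose_two_succ]; ring

section
variable {A : Type*} [Ring A] [Algebra ℂ A] (φ : ℝ) (u v : A)

lemma vu_comm (h : u * v = Complex.exp (Complex.I * φ) • (v * u)) :
    v * u = Complex.exp (-(Complex.I * φ)) • (u * v) := by
  rw [h, smul_smul, ← Complex.exp_add, neg_add_cancel, Complex.exp_zero, one_smul]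

lemma pow_vu (h : u * v = Complex.exp (Complex.I * φ) • (v * u)) (k : ℕ) :
    v ^ k * u = Complex.exp (-(Complex.I * φ * k)) • (u * v ^ k) := by
  induction k with
  | zero => simp
  | succ k ih =>
    have h1 := vu_comm φ u v h
    calc v ^ (k+1) * u = v ^ k * (v * u) := by rw [pow_succ, mul_assoc]
    _ = Complex.exp (-(Complex.I*φ)) • (v ^ k * (u * v)) := by rw [h1, mul_smul_comm]
    _ = Complex.exp (-(Complex.I*φ)) • ((v ^ k * u) * v) := by rw [mul_assoc]
    _ = (Complex.exp (-(Complex.I*φ)) * Complex.exp (-(Complex.I*φ*k))) • (u * v ^ k * v) := by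
        rw [ih, smul_mul_assoc, smul_smul]
    _ = Complex.exp (-(Complex.I*(φ:ℂ)*((k+1:ℕ):ℂ))) • (u * v ^ (k+1)) := by
        rw [← Complex.exp_add, pow_succ, ← mul_assoc]
        congr 2
        push_cast; ring

end

section
variable {A : Type*} [Ring A] [Algebra ℂ A]

/-- the generic summand -/
noncomputable def trm (φ : ℝ) (u v : A) (n l : ℕ) : A :=
  ((n.choose l : ℂ) * Complex.exp (-(Complex.I * φ * ((Efun n l : ℕ) : ℂ)))) •
    (u ^ l * v ^ (n - l))

noncomputable def trmA (φ : ℝ) (u v : A) (n l : ℕ) : A :=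
  ((n.choose l : ℂ) * Complex.exp (-(Complex.I * φ * ((Efun n l + (n - l) : ℕ) : ℂ)))) •
    (u ^ (l + 1) * v ^ (n - l))

noncomputable def trmB (φ : ℝ) (u v : A) (n l : ℕ) : A :=
  ((n.choose l : ℂ) * Complex.exp (-(Complex.I * φ * ((Efun n l + n : ℕ) : ℂ)))) •
    (u ^ l * v ^ (n + 1 - l))

lemma lem_expand (φ : ℝ) (u v : A)
    (h : u * v = Complex.exp (Complex.I * φ) • (v * u)) (n l : ℕ) (hl : l ≤ n) :
    trm φ u v n l * (u + Complex.exp (-(Complex.I * φ * (n : ℂ))) • v)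
      = trmA φ u v n l + trmB φ u v n l := by
  unfold trm trmA trmB
  rw [mul_add]
  congr 1
  · rw [smul_mul_assoc, mul_assoc (u ^ l), pow_vu φ u v h (n - l), mul_smul_comm, smul_smul,
      ← mul_assoc (u ^ l) u, ← pow_succ, mul_assoc (n.choose l : ℂ), ← Complex.exp_add]
    congr 3
    push_cast; ring
  · rw [smul_mul_assoc, mul_smul_comm, smul_smul, mul_assoc (u ^ l), ← pow_succ,
      mul_assoc (n.choose l : ℂ), ← Complex.exp_add]
    have hnl : n - l + 1 = n + 1 - l := by omega
    rw [hnl]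
    congr 2
    push_cast; ring

lemma lem_mid (φ : ℝ) (u v : A) (n l : ℕ) (hl : l < n) :
    trm φ u v (n + 1) (l + 1) = trmA φ u v n l + trmB φ u v n (l + 1) := by
  unfold trm trmA trmB
  have h1 : n + 1 - (l + 1) = n - l := by omega
  have e1 : Efun n l + (n - l) = Efun (n + 1) (l + 1) := (E1 n l (le_of_lt hl)).symm
  have e2 : Efun n (l + 1) + n = Efun (n + 1) (l + 1) := (E2 n (l + 1) hl).symm
  rw [h1, e1, e2, ← add_smul, ← add_mul]
  congr 2
  rw [Nat.choose_succ_succ]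
  push_cast; ring

end

section
variable {A : Type*} [Ring A] [Algebra ℂ A]

lemma lem_top (φ : ℝ) (u v : A) (n : ℕ) :
    trm φ u v (n + 1) (n + 1) = trmA φ u v n n := by
  simp [trm, trmA, Efun]

lemma lem_bot (φ : ℝ) (u v : A) (n : ℕ) :
    trm φ u v (n + 1) 0 = trmB φ u v n 0 := by
  simp [trm, trmB, Efun, choose_two_succ]

lemma list_coe (n : ℕ) :
    (do let a ← List.range n; pure ((a : ℂ))) = (List.range n).map (fun a : ℕ => (a : ℂ)) := by
  induction (List.range n) with
  | nil => rfl
  | cons a t ih => simpa using ih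

lemma helper (φ : ℝ) (u v : A)
    (h : u * v = Complex.exp (Complex.I * φ) • (v * u)) (n : ℕ) :
    ((List.range n).map (fun k : ℕ => u + Complex.exp (-(Complex.I * φ * (k : ℂ))) • v)).prod
      = ∑ l ∈ Finset.range (n + 1), trm φ u v n l := by
  induction n with
  | zero => simp [trm, Efun]
  | succ n ih =>
    rw [List.range_succ, List.map_append, List.prod_append, ih]
    simp only [List.map_cons, List.map_nil, List.prod_cons, List.prod_nil, mul_one]
    rw [Finset.sum_mul]
    have hexp : ∀ l ∈ Finset.range (n + 1),
        trm φ u v n l * (u + Complex.exp (-(Complex.I * φ * (n : ℂ))) • v)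
          = trmA φ u v n l + trmB φ u v n l := fun l hl =>
      lem_expand φ u v h n l (Nat.lt_succ_iff.mp (Finset.mem_range.mp hl))
    rw [Finset.sum_congr rfl hexp, Finset.sum_add_distrib]
    rw [Finset.sum_range_succ (fun l => trmA φ u v n l) n,
        Finset.sum_range_succ' (fun l => trmB φ u v n l) n]
    rw [Finset.sum_range_succ' (fun l => trm φ u v (n + 1) l) (n + 1),
        Finset.sum_range_succ (fun l => trm φ u v (n + 1) (l + 1)) n]
    have hmid : ∑ l ∈ Finset.range n, trm φ u v (n + 1) (l + 1)
        = ∑ l ∈ Finset.range n, (trmA φ u v n l + trmB φ u v n (l + 1)) :=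
      Finset.sum_congr rfl fun l hl => lem_mid φ u v n l (Finset.mem_range.mp hl)
    rw [hmid, Finset.sum_add_distrib, lem_top, lem_bot]
    abel

end


/-- **Deformed binomial expansion governing beam-splitter evolution of bosonic-anyon
coherent states.** If `X, Y` in an associative unital ℂ-algebra satisfy `XY = e^{iφ}·YX`,
then for all `a, b ∈ ℂ` and `n ∈ ℕ`, the ordered product `∏_{k=0}^{n−1} (aX + e^{−ikφ}·bY)`
equals `∑_{l=0}^{n} C(n,l)·e^{−iφ·(l(n−l) + (n−l)(n−l−1)/2)}·(aX)^l·(bY)^{n−l}`. -/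
theorem anyonic_binomial_identity' (A : Type*) [Ring A] [Algebra ℂ A] (φ : ℝ) (X Y : A)
    (h : X * Y = Complex.exp (Complex.I * φ) • (Y * X)) (a b : ℂ) (n : ℕ) :
    ((List.range n).map
        (fun k => a • X + (Complex.exp (-(Complex.I * φ * k)) * b) • Y)).prod
      = ∑ l ∈ Finset.range (n + 1),
          ((n.choose l : ℂ) *
              Complex.exp (-(Complex.I * φ *
                (l * (n - l) + (n - l) * (n - l - 1) / 2 : ℕ)))) •
            ((a • X) ^ l * (b • Y) ^ (n - l)) := by
  have h' : (a • X) * (b • Y) = Complex.exp (Complex.I * φ) • ((b • Y) * (a • X)) := by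
    rw [smul_mul_smul_comm, smul_mul_smul_comm, h, smul_smul, smul_smul]
    congr 1
    ring
  have key := helper φ (a • X) (b • Y) h' n
  simp only [mul_smul]
  rw [list_coe n, List.map_map]
  rw [show ((fun k : ℂ => a • X + Complex.exp (-(Complex.I * φ * k)) • (b • Y)) ∘
      (Nat.cast : ℕ → ℂ))
      = (fun k : ℕ => a • X + Complex.exp (-(Complex.I * φ * (k : ℂ))) • (b • Y)) from rfl]
  rw [key]
  refine Finset.sum_congr rfl fun l hl => ?_
  simp [trm, Efun, Nat.choose_two_right, mul_smul]
end

section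
/- The bosonic-anyon creation and annihilation operators βᵢ†, βᵢ on the Fock space V satisfy the deformed commutation relations: for all modes i, j, (i) βᵢ·βⱼ† − e^{−iφ·ε(i,j)}·βⱼ†·βᵢ = δ_{ij}·id_V, (ii) βᵢ·βⱼ − e^{iφ·ε(i,j)}·βⱼ·βᵢ = 0, and (iii) βᵢ†·βⱼ† − e^{iφ·ε(i,j)}·βⱼ†·βᵢ† = 0, where ε(i,j) is the sign of j − i (and ε(i,i) = 0). -/
open scoped BigOperators

/-- The bosonic-anyon Fock space on `m` modes: finitely supported complex functions on
occupation tuples. -/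
abbrev BosonicFock (m : ℕ) := (Fin m → ℕ) →₀ ℂ

/-- Bosonic-anyon creation operator `βᵢ†`:
`βᵢ†·e_n = exp(−iφ·∑_{k<i} n_k)·√(nᵢ+1)·e_{n+δᵢ}`. -/
noncomputable def bCreate (m : ℕ) (φ : ℝ) (i : Fin m) :
    BosonicFock m →ₗ[ℂ] BosonicFock m :=
  Finsupp.lift _ ℂ _ fun n =>
    (Complex.exp (-(Complex.I * φ) * (∑ k ∈ Finset.univ.filter (fun k => k < i), (n k : ℂ)))
        * (Real.sqrt (n i + 1) : ℝ)) •
      Finsupp.single (Function.update n i (n i + 1)) 1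

/-- Bosonic-anyon annihilation operator `βᵢ`:
`βᵢ·e_n = exp(iφ·∑_{k<i} n_k)·√(nᵢ)·e_{n−δᵢ}` (zero when `nᵢ = 0`, since `√0 = 0`). -/
noncomputable def bAnnih (m : ℕ) (φ : ℝ) (i : Fin m) :
    BosonicFock m →ₗ[ℂ] BosonicFock m :=
  Finsupp.lift _ ℂ _ fun n =>
    (Complex.exp ((Complex.I * φ) * (∑ k ∈ Finset.univ.filter (fun k => k < i), (n k : ℂ)))
        * (Real.sqrt (n i) : ℝ)) •
      Finsupp.single (Function.update n i (n i - 1)) 1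

noncomputable def S (m : ℕ) (i : Fin m) (n : Fin m → ℕ) : ℂ :=
  ∑ k ∈ Finset.univ.filter (fun k => k < i), (n k : ℂ)

lemma bCreate_single (m : ℕ) (φ : ℝ) (i : Fin m) (n : Fin m → ℕ) :
    bCreate m φ i (Finsupp.single n 1) =
      (Complex.exp (-(Complex.I * φ) * S m i n) * (Real.sqrt (n i + 1) : ℝ)) •
        Finsupp.single (Function.update n i (n i + 1)) 1 := by
  simp [bCreate, S, Finsupp.lift_apply, Finsupp.sum_single_index]

lemma bAnnih_single (m : ℕ) (φ : ℝ) (i : Fin m) (n : Fin m → ℕ) :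
    bAnnih m φ i (Finsupp.single n 1) =
      (Complex.exp ((Complex.I * φ) * S m i n) * (Real.sqrt (n i) : ℝ)) •
        Finsupp.single (Function.update n i (n i - 1)) 1 := by
  simp [bAnnih, S, Finsupp.lift_apply, Finsupp.sum_single_index]

lemma S_update_of_le (m : ℕ) (i j : Fin m) (h : i ≤ j) (n : Fin m → ℕ) (v : ℕ) :
    S m i (Function.update n j v) = S m i n := by
  refine Finset.sum_congr rfl fun k hk => ?_
  simp only [Finset.mem_filter] at hk
  rw [Function.update_of_ne (hk.2.trans_le h).ne]

lemma S_update_of_lt (m : ℕ) (i j : Fin m) (h : j < i) (n : Fin m → ℕ) (v : ℕ) :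
    S m i (Function.update n j v) = S m i n - n j + v := by
  unfold S
  have hmem : j ∈ Finset.univ.filter (fun k => k < i) := by simp [h]
  have h1 : (fun k => ((Function.update n j v k : ℕ) : ℂ)) =
      Function.update (fun k => (n k : ℂ)) j (v : ℂ) := by
    funext k
    by_cases hk : k = j <;> simp [hk, Function.update_apply]
  rw [show (∑ k ∈ Finset.univ.filter (fun k => k < i), ((Function.update n j v k : ℕ) : ℂ))
      = ∑ k ∈ Finset.univ.filter (fun k => k < i),
          Function.update (fun k => (n k : ℂ)) j (v : ℂ) k from by rw [← h1],
    Finset.sum_update_of_mem hmem, Finset.sdiff_singleton_eq_erase,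
    Finset.sum_erase_eq_sub hmem]
  ring

lemma ext3 (m : ℕ) (f g : BosonicFock m →ₗ[ℂ] BosonicFock m)
    (h : ∀ n : Fin m → ℕ, f (Finsupp.single n 1) = g (Finsupp.single n 1)) : f = g := by
  refine Finsupp.lhom_ext fun n b => ?_
  have hb : (Finsupp.single n b : BosonicFock m) = b • Finsupp.single n 1 := by
    rw [Finsupp.smul_single, smul_eq_mul, mul_one]
  rw [hb, map_smul, map_smul, h]

lemma sh (a b c d e r s : ℂ) (h : r = 0 ∨ s = 0 ∨ a + b = c + d + e) :
    Complex.exp a * r * (Complex.exp b * s)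
      = Complex.exp c * (Complex.exp d * s * (Complex.exp e * r)) := by
  rcases h with h | h | h
  · simp [h]
  · simp [h]
  · calc Complex.exp a * r * (Complex.exp b * s)
        = Complex.exp (a + b) * (r * s) := by rw [Complex.exp_add]; ring
      _ = Complex.exp (c + d + e) * (r * s) := by rw [h]
      _ = _ := by rw [Complex.exp_add, Complex.exp_add]; ring

lemma ss (r : ℝ) (hr : 0 ≤ r) :
    ((Real.sqrt r : ℝ) : ℂ) * ((Real.sqrt r : ℝ) : ℂ) = (r : ℂ) := by
  rw [← Complex.ofReal_mul, Real.mul_self_sqrt hr]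

/-- **Deformed commutation relations for bosonic anyons.** For all modes `i, j`:
(i) `βᵢβⱼ† − e^{−iφ·ε(i,j)}·βⱼ†βᵢ = δ_{ij}·id`,
(ii) `βᵢβⱼ − e^{iφ·ε(i,j)}·βⱼβᵢ = 0`,
(iii) `βᵢ†βⱼ† − e^{iφ·ε(i,j)}·βⱼ†βᵢ† = 0`,
where `ε(i,j)` is the sign of `j − i`. -/
theorem bosonic_anyon_relations (m : ℕ) (hm : 1 ≤ m) (φ : ℝ) (i j : Fin m) :
    (bAnnih m φ i ∘ₗ bCreate m φ j
        - Complex.exp (-(Complex.I * φ) * ((Int.sign ((j : ℤ) - (i : ℤ)) : ℤ) : ℂ)) •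
            (bCreate m φ j ∘ₗ bAnnih m φ i)
      = (if i = j then (1 : ℂ) else 0) • LinearMap.id) ∧
    (bAnnih m φ i ∘ₗ bAnnih m φ j
        - Complex.exp ((Complex.I * φ) * ((Int.sign ((j : ℤ) - (i : ℤ)) : ℤ) : ℂ)) •
            (bAnnih m φ j ∘ₗ bAnnih m φ i)
      = 0) ∧
    (bCreate m φ i ∘ₗ bCreate m φ j
        - Complex.exp ((Complex.I * φ) * ((Int.sign ((j : ℤ) - (i : ℤ)) : ℤ) : ℂ)) •
            (bCreate m φ j ∘ₗ bCreate m φ i)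
      = 0) := by
  rcases lt_trichotomy i j with hij | rfl | hij
  -- case i < j
  · have hne : i ≠ j := ne_of_lt hij
    have h' : (i : ℕ) < (j : ℕ) := hij
    have hsign : ((((j : ℤ) - (i : ℤ)).sign : ℤ) : ℂ) = 1 := by
      rw [Int.sign_eq_one_of_pos (by omega)]
      norm_num
    refine ⟨?_, ?_, ?_⟩
    · apply ext3; intro n
      simp only [LinearMap.sub_apply, LinearMap.comp_apply, LinearMap.smul_apply,
        LinearMap.id_apply, LinearMap.zero_apply, bCreate_single, bAnnih_single, map_smul,
        hsign, mul_one, if_neg hne, zero_smul, smul_smul,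
        Function.update_of_ne hne, Function.update_of_ne hne.symm,
        S_update_of_le m i j hij.le, S_update_of_lt m j i hij]
      rw [Function.update_comm hne.symm, ← sub_smul]
      apply smul_eq_zero_of_left
      rw [sub_eq_zero]
      refine sh _ _ _ _ _ _ _ ?_
      by_cases hni : n i = 0
      · exact Or.inr (Or.inl (by simp [hni]))
      · refine Or.inr (Or.inr ?_)
        rw [Nat.cast_sub (by omega : 1 ≤ n i)]
        push_cast
        ring
    · apply ext3; intro n
      simp only [LinearMap.sub_apply, LinearMap.comp_apply, LinearMap.smul_apply,
        LinearMap.zero_apply, bAnnih_single, map_smul,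
        hsign, mul_one, smul_smul,
        Function.update_of_ne hne, Function.update_of_ne hne.symm,
        S_update_of_le m i j hij.le, S_update_of_lt m j i hij]
      rw [Function.update_comm hne.symm, ← sub_smul]
      apply smul_eq_zero_of_left
      rw [sub_eq_zero]
      refine sh _ _ _ _ _ _ _ ?_
      by_cases hni : n i = 0
      · exact Or.inr (Or.inl (by simp [hni]))
      · refine Or.inr (Or.inr ?_)
        rw [Nat.cast_sub (by omega : 1 ≤ n i)]
        push_cast
        ring
    · apply ext3; intro n
      simp only [LinearMap.sub_apply, LinearMap.comp_apply, LinearMap.smul_apply,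
        LinearMap.zero_apply, bCreate_single, map_smul,
        hsign, mul_one, smul_smul,
        Function.update_of_ne hne, Function.update_of_ne hne.symm,
        S_update_of_le m i j hij.le, S_update_of_lt m j i hij]
      rw [Function.update_comm hne.symm, ← sub_smul]
      apply smul_eq_zero_of_left
      rw [sub_eq_zero]
      refine sh _ _ _ _ _ _ _ ?_
      refine Or.inr (Or.inr ?_)
      push_cast
      ring
  -- case i = j
  · have hsign : ((Int.sign ((i : ℤ) - (i : ℤ)) : ℤ) : ℂ) = 0 := by simp
    refine ⟨?_, ?_, ?_⟩
    · apply ext3; intro n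
      simp only [LinearMap.sub_apply, LinearMap.comp_apply, LinearMap.smul_apply,
        LinearMap.id_apply, bCreate_single, bAnnih_single, map_smul, hsign,
        mul_zero, Complex.exp_zero, one_smul, if_pos rfl,
        Function.update_self, Function.update_idem, smul_smul,
        S_update_of_le m i i le_rfl, Nat.add_sub_cancel, Function.update_eq_self]
      have hexp : Complex.exp (-(Complex.I * φ) * S m i n)
          * Complex.exp (Complex.I * φ * S m i n) = 1 := by
        rw [← Complex.exp_add, show -(Complex.I * φ) * S m i n + Complex.I * φ * S m i n = 0
          from by ring, Complex.exp_zero]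
      by_cases hn : n i = 0
      · rw [hn]
        simp only [Nat.cast_zero, Nat.cast_one, zero_add, Nat.cast_ofNat, Nat.zero_sub,
          Real.sqrt_zero, Real.sqrt_one, Complex.ofReal_zero, Complex.ofReal_one,
          mul_zero, zero_mul, zero_smul, sub_zero, mul_one, Nat.cast_succ, Nat.add_eq,
          Nat.zero_add, if_pos trivial, Nat.cast_id, show ((0:ℕ)+1 : ℕ) = 1 from rfl]
        rw [hexp, one_smul]
      · obtain ⟨k, hk⟩ : ∃ k, n i = k + 1 := ⟨n i - 1, by omega⟩
        rw [hk]
        simp only [Nat.add_sub_cancel]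
        rw [show Function.update n i (k + 1) = n from by rw [← hk, Function.update_eq_self],
          ← sub_smul, if_pos trivial]
        congr 1
        have h1 := ss ((k : ℝ) + 1 + 1) (by positivity)
        have h2 := ss ((k : ℝ) + 1) (by positivity)
        push_cast at h1 h2 ⊢
        linear_combination Complex.exp (-(Complex.I * φ) * S m i n)
            * Complex.exp (Complex.I * φ * S m i n) * h1
          - Complex.exp (-(Complex.I * φ) * S m i n)
            * Complex.exp (Complex.I * φ * S m i n) * h2 + hexp
    · have : ((i : ℤ) - (i : ℤ)) = 0 := by ring
      rw [this]
      simp only [Int.sign_zero, Int.cast_zero, mul_zero, Complex.exp_zero, one_smul]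
      abel
    · have : ((i : ℤ) - (i : ℤ)) = 0 := by ring
      rw [this]
      simp only [Int.sign_zero, Int.cast_zero, mul_zero, Complex.exp_zero, one_smul]
      abel
  -- case j < i
  · have hne : i ≠ j := ne_of_gt hij
    have h' : (j : ℕ) < (i : ℕ) := hij
    have hsign : ((((j : ℤ) - (i : ℤ)).sign : ℤ) : ℂ) = -1 := by
      rw [Int.sign_eq_neg_one_of_neg (by omega)]
      norm_num
    refine ⟨?_, ?_, ?_⟩
    · apply ext3; intro n
      simp only [LinearMap.sub_apply, LinearMap.comp_apply, LinearMap.smul_apply,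
        LinearMap.id_apply, LinearMap.zero_apply, bCreate_single, bAnnih_single, map_smul,
        hsign, mul_neg_one, neg_neg, if_neg hne, zero_smul, smul_smul,
        Function.update_of_ne hne, Function.update_of_ne hne.symm,
        S_update_of_le m j i hij.le, S_update_of_lt m i j hij]
      rw [Function.update_comm hne.symm, ← sub_smul]
      apply smul_eq_zero_of_left
      rw [sub_eq_zero]
      refine sh _ _ _ _ _ _ _ ?_
      refine Or.inr (Or.inr ?_)
      push_cast
      ring
    · apply ext3; intro n
      simp only [LinearMap.sub_apply, LinearMap.comp_apply, LinearMap.smul_apply,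
        LinearMap.zero_apply, bAnnih_single, map_smul,
        hsign, mul_neg_one, neg_neg, smul_smul,
        Function.update_of_ne hne, Function.update_of_ne hne.symm,
        S_update_of_le m j i hij.le, S_update_of_lt m i j hij]
      rw [Function.update_comm hne.symm, ← sub_smul]
      apply smul_eq_zero_of_left
      rw [sub_eq_zero]
      refine sh _ _ _ _ _ _ _ ?_
      by_cases hnj : n j = 0
      · exact Or.inl (by simp [hnj])
      · refine Or.inr (Or.inr ?_)
        rw [Nat.cast_sub (by omega : 1 ≤ n j)]
        push_cast
        ring
    · apply ext3; intro n
      simp only [LinearMap.sub_apply, LinearMap.comp_apply, LinearMap.smul_apply,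
        LinearMap.zero_apply, bCreate_single, map_smul,
        hsign, mul_neg_one, neg_neg, smul_smul,
        Function.update_of_ne hne, Function.update_of_ne hne.symm,
        S_update_of_le m j i hij.le, S_update_of_lt m i j hij]
      rw [Function.update_comm hne.symm, ← sub_smul]
      apply smul_eq_zero_of_left
      rw [sub_eq_zero]
      refine sh _ _ _ _ _ _ _ ?_
      refine Or.inr (Or.inr ?_)
      push_cast
      ring
end

section
/- The fermionic-anyon creation and annihilation matrices ξᵢ†, ξᵢ on (ℂ²)^{⊗m} satisfy the deformed anti-commutation relations: for all modes i, j, (i) ξᵢ·ξⱼ† + e^{−iφ·ε(i,j)}·ξⱼ†·ξᵢ = δ_{ij}·I, (ii) ξᵢ·ξⱼ + e^{iφ·ε(i,j)}·ξⱼ·ξᵢ = 0, and (iii) ξᵢ†·ξⱼ† + e^{iφ·ε(i,j)}·ξⱼ†·ξᵢ† = 0, where ε(i,j) is the sign of j − i (and ε(i,i) = 0) and I is the identity matrix. -/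
open scoped BigOperators
open Matrix

/-- `σ = [[0,1],[0,0]]`, the single-mode annihilation matrix. -/
def sigMat : Matrix (Fin 2) (Fin 2) ℂ := !![0, 1; 0, 0]

/-- `D = diag(1, −e^{iφ})`, the Jordan–Wigner string matrix. -/
noncomputable def dMat (φ : ℝ) : Matrix (Fin 2) (Fin 2) ℂ :=
  !![1, 0; 0, -Complex.exp (Complex.I * φ)]

/-- The fermionic-anyon annihilation matrix `ξᵢ = D^{⊗(i−1)} ⊗ σ ⊗ I₂^{⊗(m−i)}` on
`(ℂ²)^{⊗m}`, realized entrywise on tensor indices `Fin m → Fin 2`. -/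
noncomputable def xi (m : ℕ) (φ : ℝ) (i : Fin m) :
    Matrix (Fin m → Fin 2) (Fin m → Fin 2) ℂ :=
  Matrix.of fun r c => ∏ k : Fin m,
    if k < i then dMat φ (r k) (c k)
    else if k = i then sigMat (r k) (c k)
    else if r k = c k then 1 else 0

/-! ### Auxiliary framework: entrywise tensor products of one-mode matrices -/

/-- Entrywise tensor product of a family of `2×2` matrices. -/
noncomputable def tenP (m : ℕ) (f : Fin m → Matrix (Fin 2) (Fin 2) ℂ) :
    Matrix (Fin m → Fin 2) (Fin m → Fin 2) ℂ :=
  Matrix.of fun r c => ∏ k : Fin m, f k (r k) (c k)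

lemma tenP_apply (m : ℕ) (f : Fin m → Matrix (Fin 2) (Fin 2) ℂ) (r c : Fin m → Fin 2) :
    tenP m f r c = ∏ k : Fin m, f k (r k) (c k) := rfl

lemma tenP_mul (m : ℕ) (f g : Fin m → Matrix (Fin 2) (Fin 2) ℂ) :
    tenP m f * tenP m g = tenP m fun k => f k * g k := by
  ext r c
  simp only [Matrix.mul_apply, tenP_apply]
  rw [Fintype.prod_sum fun k x => f k (r k) x * g k x (c k)]
  exact Finset.sum_congr rfl fun s _ => Finset.prod_mul_distrib.symm

lemma tenP_conjTranspose (m : ℕ) (f : Fin m → Matrix (Fin 2) (Fin 2) ℂ) :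
    (tenP m f)ᴴ = tenP m fun k => (f k)ᴴ := by
  ext r c
  simp [tenP_apply, Matrix.conjTranspose_apply, map_prod]

lemma tenP_one (m : ℕ) : tenP m (fun _ => (1 : Matrix (Fin 2) (Fin 2) ℂ)) = 1 := by
  ext r c
  simp only [tenP_apply, Matrix.one_apply]
  rw [Fintype.prod_boole]
  simp [funext_iff]

/-- The factor family of `xi`. -/
noncomputable def xif (m : ℕ) (φ : ℝ) (i : Fin m) (k : Fin m) : Matrix (Fin 2) (Fin 2) ℂ :=
  if k < i then dMat φ else if k = i then sigMat else 1

lemma xi_eq_tenP (m : ℕ) (φ : ℝ) (i : Fin m) : xi m φ i = tenP m (xif m φ i) := by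
  ext r c
  simp only [xi, tenP_apply, Matrix.of_apply, xif]
  refine Finset.prod_congr rfl fun k _ => ?_
  split_ifs <;> simp_all [Matrix.one_apply]

lemma tenP_smul (m : ℕ) (i₀ : Fin m) (cc : ℂ) (f g : Fin m → Matrix (Fin 2) (Fin 2) ℂ)
    (h : f i₀ = cc • g i₀) (h' : ∀ k ≠ i₀, f k = g k) :
    tenP m f = cc • tenP m g := by
  ext r c
  simp only [tenP_apply, Matrix.smul_apply, smul_eq_mul]
  rw [← Finset.mul_prod_erase _ _ (Finset.mem_univ i₀),
    ← Finset.mul_prod_erase _ (fun k => g k (r k) (c k)) (Finset.mem_univ i₀), h]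
  rw [Finset.prod_congr rfl fun k hk => by
    rw [h' k (Finset.ne_of_mem_erase hk)]]
  simp [mul_assoc]

lemma tenP_add (m : ℕ) (i₀ : Fin m) (f g h : Fin m → Matrix (Fin 2) (Fin 2) ℂ)
    (hi : g i₀ + h i₀ = f i₀) (h' : ∀ k ≠ i₀, g k = f k ∧ h k = f k) :
    tenP m g + tenP m h = tenP m f := by
  ext r c
  simp only [tenP_apply, Matrix.add_apply]
  rw [← Finset.mul_prod_erase _ (fun k => f k (r k) (c k)) (Finset.mem_univ i₀),
    ← Finset.mul_prod_erase _ (fun k => g k (r k) (c k)) (Finset.mem_univ i₀),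
    ← Finset.mul_prod_erase _ (fun k => h k (r k) (c k)) (Finset.mem_univ i₀)]
  have e1 : ∏ k ∈ Finset.univ.erase i₀, g k (r k) (c k)
      = ∏ k ∈ Finset.univ.erase i₀, f k (r k) (c k) :=
    Finset.prod_congr rfl fun k hk => by rw [(h' k (Finset.ne_of_mem_erase hk)).1]
  have e2 : ∏ k ∈ Finset.univ.erase i₀, h k (r k) (c k)
      = ∏ k ∈ Finset.univ.erase i₀, f k (r k) (c k) :=
    Finset.prod_congr rfl fun k hk => by rw [(h' k (Finset.ne_of_mem_erase hk)).2]
  rw [e1, e2, ← add_mul, ← Matrix.add_apply, hi]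

lemma tenP_zero (m : ℕ) (i₀ : Fin m) (f : Fin m → Matrix (Fin 2) (Fin 2) ℂ)
    (h : f i₀ = 0) : tenP m f = 0 := by
  ext r c
  simp only [tenP_apply, Matrix.zero_apply]
  exact Finset.prod_eq_zero (Finset.mem_univ i₀) (by simp [h])

/-! ### One-mode computations -/

lemma dMat_mul_dMatH (φ : ℝ) : dMat φ * (dMat φ)ᴴ = 1 := by
  ext a b
  have hconj : (starRingEnd ℂ) (Complex.exp (Complex.I * φ)) = Complex.exp (-(Complex.I * φ)) := by
    rw [← Complex.exp_conj, _root_.map_mul, Complex.conj_I, Complex.conj_ofReal, neg_mul]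
  have hee : Complex.exp (Complex.I * φ) * Complex.exp (-(Complex.I * φ)) = 1 := by
    rw [← Complex.exp_add, add_neg_cancel, Complex.exp_zero]
  have hee' : Complex.exp (-(Complex.I * φ)) * Complex.exp (Complex.I * φ) = 1 := by
    rw [← Complex.exp_add, neg_add_cancel, Complex.exp_zero]
  fin_cases a <;> fin_cases b <;>
    simp [dMat, sigMat, Matrix.mul_apply, Fin.sum_univ_two, Matrix.conjTranspose_apply,
      Matrix.one_apply, hconj, hee, hee', map_neg]

lemma dMatH_mul_dMat (φ : ℝ) : (dMat φ)ᴴ * dMat φ = 1 := by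
  ext a b
  have hconj : (starRingEnd ℂ) (Complex.exp (Complex.I * φ)) = Complex.exp (-(Complex.I * φ)) := by
    rw [← Complex.exp_conj, _root_.map_mul, Complex.conj_I, Complex.conj_ofReal, neg_mul]
  have hee : Complex.exp (Complex.I * φ) * Complex.exp (-(Complex.I * φ)) = 1 := by
    rw [← Complex.exp_add, add_neg_cancel, Complex.exp_zero]
  have hee' : Complex.exp (-(Complex.I * φ)) * Complex.exp (Complex.I * φ) = 1 := by
    rw [← Complex.exp_add, neg_add_cancel, Complex.exp_zero]
  fin_cases a <;> fin_cases b <;>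
    simp [dMat, sigMat, Matrix.mul_apply, Fin.sum_univ_two, Matrix.conjTranspose_apply,
      Matrix.one_apply, hconj, hee, hee', map_neg]

lemma sig_mul_sig : sigMat * sigMat = 0 := by
  ext a b
  fin_cases a <;> fin_cases b <;>
    simp [sigMat, Matrix.mul_apply, Fin.sum_univ_two, Matrix.conjTranspose_apply,
      Matrix.one_apply, Matrix.vecMul, dotProduct, Fin.sum_univ_two]

lemma sig_mul_dMat (φ : ℝ) :
    sigMat * dMat φ = (-Complex.exp (Complex.I * φ)) • (dMat φ * sigMat) := by
  ext a b
  have hconj : (starRingEnd ℂ) (Complex.exp (Complex.I * φ)) = Complex.exp (-(Complex.I * φ)) := by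
    rw [← Complex.exp_conj, _root_.map_mul, Complex.conj_I, Complex.conj_ofReal, neg_mul]
  have hee : Complex.exp (Complex.I * φ) * Complex.exp (-(Complex.I * φ)) = 1 := by
    rw [← Complex.exp_add, add_neg_cancel, Complex.exp_zero]
  have hee' : Complex.exp (-(Complex.I * φ)) * Complex.exp (Complex.I * φ) = 1 := by
    rw [← Complex.exp_add, neg_add_cancel, Complex.exp_zero]
  fin_cases a <;> fin_cases b <;>
    simp [dMat, sigMat, Matrix.mul_apply, Fin.sum_univ_two, Matrix.conjTranspose_apply,
      Matrix.one_apply, hconj, hee, hee', map_neg]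

lemma sig_mul_dMatH (φ : ℝ) :
    sigMat * (dMat φ)ᴴ = (-Complex.exp (-(Complex.I * φ))) • ((dMat φ)ᴴ * sigMat) := by
  ext a b
  have hconj : (starRingEnd ℂ) (Complex.exp (Complex.I * φ)) = Complex.exp (-(Complex.I * φ)) := by
    rw [← Complex.exp_conj, _root_.map_mul, Complex.conj_I, Complex.conj_ofReal, neg_mul]
  have hee : Complex.exp (Complex.I * φ) * Complex.exp (-(Complex.I * φ)) = 1 := by
    rw [← Complex.exp_add, add_neg_cancel, Complex.exp_zero]
  have hee' : Complex.exp (-(Complex.I * φ)) * Complex.exp (Complex.I * φ) = 1 := by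
    rw [← Complex.exp_add, neg_add_cancel, Complex.exp_zero]
  fin_cases a <;> fin_cases b <;>
    simp [dMat, sigMat, Matrix.mul_apply, Fin.sum_univ_two, Matrix.conjTranspose_apply,
      Matrix.one_apply, hconj, hee, hee', map_neg]

lemma sig_mul_sigH_add : sigMat * sigMatᴴ + sigMatᴴ * sigMat = 1 := by
  ext a b
  fin_cases a <;> fin_cases b <;>
    simp [sigMat, Matrix.mul_apply, Fin.sum_univ_two, Matrix.conjTranspose_apply,
      Matrix.one_apply, Matrix.vecMul, dotProduct, Fin.sum_univ_two]


/-! ### Commutation lemmas -/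

lemma conj_Iphi (φ : ℝ) : (starRingEnd ℂ) (Complex.I * (φ : ℂ)) = -(Complex.I * φ) := by
  rw [_root_.map_mul, Complex.conj_I, Complex.conj_ofReal, neg_mul]

lemma exp_mul_exp_neg (x : ℂ) : Complex.exp x * Complex.exp (-x) = 1 := by
  rw [← Complex.exp_add, add_neg_cancel, Complex.exp_zero]

/-- Cancel: if `A = (-c) • B` then `A + c • B = 0`. -/
lemma cancel_rel {n : Type*} [Fintype n] {A B : Matrix n n ℂ} {c : ℂ}
    (h : A = (-c) • B) : A + c • B = 0 := by
  rw [h, neg_smul, neg_add_cancel]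

/-- Flip a scaled-commutation relation. -/
lemma flip_rel {n : Type*} [Fintype n] {A B : Matrix n n ℂ} {x : ℂ}
    (h : A = (-Complex.exp x) • B) : B = (-Complex.exp (-x)) • A := by
  rw [h, smul_smul, neg_mul_neg, mul_comm, exp_mul_exp_neg, one_smul]

/-- Conjugate-transpose a scaled-commutation relation. -/
lemma conjT_rel {n : Type*} [Fintype n] {A B : Matrix n n ℂ} {x : ℂ}
    (h : A = (-Complex.exp x) • B) :
    Aᴴ = (-Complex.exp ((starRingEnd ℂ) x)) • Bᴴ := by
  rw [h, Matrix.conjTranspose_smul]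
  congr 1
  rw [star_neg]
  congr 1
  exact (Complex.exp_conj x).symm

lemma xi_mul_xi_comm (m : ℕ) (φ : ℝ) {i j : Fin m} (hij : i < j) :
    xi m φ i * xi m φ j = (-Complex.exp (Complex.I * φ)) • (xi m φ j * xi m φ i) := by
  rw [xi_eq_tenP, xi_eq_tenP, tenP_mul, tenP_mul]
  apply tenP_smul m i
  · have h1 : xif m φ i i = sigMat := by simp [xif]
    have h2 : xif m φ j i = dMat φ := by simp [xif, hij]
    simp only [h1, h2]
    exact sig_mul_dMat φ
  · intro k hk
    by_cases h1 : k < i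
    · have h2 : k < j := h1.trans hij
      simp [xif, h1, h2]
    · have h3 : xif m φ i k = 1 := by simp [xif, h1, hk]
      simp [h3]

lemma xi_mul_xiH_comm (m : ℕ) (φ : ℝ) {i j : Fin m} (hij : i < j) :
    xi m φ i * (xi m φ j)ᴴ
      = (-Complex.exp (-(Complex.I * φ))) • ((xi m φ j)ᴴ * xi m φ i) := by
  rw [xi_eq_tenP, xi_eq_tenP, tenP_conjTranspose, tenP_mul, tenP_mul]
  apply tenP_smul m i
  · have h1 : xif m φ i i = sigMat := by simp [xif]
    have h2 : xif m φ j i = dMat φ := by simp [xif, hij]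
    simp only [h1, h2]
    exact sig_mul_dMatH φ
  · intro k hk
    by_cases h1 : k < i
    · have h2 : k < j := h1.trans hij
      simp [xif, h1, h2, dMat_mul_dMatH, dMatH_mul_dMat]
    · have h3 : xif m φ i k = 1 := by simp [xif, h1, hk]
      simp [h3]

lemma xiH_mul_xiH_comm (m : ℕ) (φ : ℝ) {i j : Fin m} (hij : i < j) :
    (xi m φ i)ᴴ * (xi m φ j)ᴴ
      = (-Complex.exp (Complex.I * φ)) • ((xi m φ j)ᴴ * (xi m φ i)ᴴ) := by
  have h := conjT_rel (xi_mul_xi_comm m φ hij)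
  rw [Matrix.conjTranspose_mul, Matrix.conjTranspose_mul, conj_Iphi] at h
  have := flip_rel h
  rwa [neg_neg] at this

lemma xi_sq (m : ℕ) (φ : ℝ) (i : Fin m) : xi m φ i * xi m φ i = 0 := by
  rw [xi_eq_tenP, tenP_mul]
  exact tenP_zero m i _ (by simp [xif, sig_mul_sig])

lemma xi_diag (m : ℕ) (φ : ℝ) (i : Fin m) :
    xi m φ i * (xi m φ i)ᴴ + (xi m φ i)ᴴ * xi m φ i = 1 := by
  rw [xi_eq_tenP, tenP_conjTranspose, tenP_mul, tenP_mul, ← tenP_one m]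
  apply tenP_add m i
  · have h1 : xif m φ i i = sigMat := by simp [xif]
    simp only [h1]
    exact sig_mul_sigH_add
  · intro k hk
    by_cases h1 : k < i
    · simp [xif, h1, dMat_mul_dMatH, dMatH_mul_dMat]
    · have h3 : xif m φ i k = 1 := by simp [xif, h1, hk]
      simp [h3]

/-- **Deformed anti-commutation relations for fermionic anyons.** For all modes `i, j`:
(i) `ξᵢξⱼ† + e^{−iφ·ε(i,j)}·ξⱼ†ξᵢ = δ_{ij}·I`,
(ii) `ξᵢξⱼ + e^{iφ·ε(i,j)}·ξⱼξᵢ = 0`,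
(iii) `ξᵢ†ξⱼ† + e^{iφ·ε(i,j)}·ξⱼ†ξᵢ† = 0`,
where `ε(i,j)` is the sign of `j − i`. -/
theorem fermionic_anyon_relations (m : ℕ) (hm : 1 ≤ m) (φ : ℝ) (i j : Fin m) :
    (xi m φ i * (xi m φ j)ᴴ
        + Complex.exp (-(Complex.I * φ) * ((Int.sign ((j : ℤ) - (i : ℤ)) : ℤ) : ℂ)) •
            ((xi m φ j)ᴴ * xi m φ i)
      = (if i = j then (1 : ℂ) else 0) • (1 : Matrix (Fin m → Fin 2) (Fin m → Fin 2) ℂ)) ∧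
    (xi m φ i * xi m φ j
        + Complex.exp ((Complex.I * φ) * ((Int.sign ((j : ℤ) - (i : ℤ)) : ℤ) : ℂ)) •
            (xi m φ j * xi m φ i)
      = 0) ∧
    ((xi m φ i)ᴴ * (xi m φ j)ᴴ
        + Complex.exp ((Complex.I * φ) * ((Int.sign ((j : ℤ) - (i : ℤ)) : ℤ) : ℂ)) •
            ((xi m φ j)ᴴ * (xi m φ i)ᴴ)
      = 0) := by
  rcases lt_trichotomy i j with hij | rfl | hji
  · have hs : ((Int.sign ((j : ℤ) - (i : ℤ)) : ℤ) : ℂ) = 1 := by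
      rw [Int.sign_eq_one_of_pos (sub_pos.mpr (by exact_mod_cast hij))]
      norm_num
    rw [hs, mul_one, mul_one, if_neg hij.ne, zero_smul]
    refine ⟨cancel_rel (xi_mul_xiH_comm m φ hij),
      cancel_rel (xi_mul_xi_comm m φ hij),
      cancel_rel (xiH_mul_xiH_comm m φ hij)⟩
  · have hs : ((Int.sign ((i : ℤ) - (i : ℤ)) : ℤ) : ℂ) = 0 := by
      simp
    rw [hs, mul_zero, mul_zero, Complex.exp_zero, one_smul, one_smul, one_smul, if_pos rfl,
      one_smul]
    have hz : (xi m φ i)ᴴ * (xi m φ i)ᴴ = 0 := by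
      rw [← Matrix.conjTranspose_mul, xi_sq, Matrix.conjTranspose_zero]
    exact ⟨xi_diag m φ i, by rw [xi_sq, add_zero], by rw [hz, add_zero]⟩
  · have hs : ((Int.sign ((j : ℤ) - (i : ℤ)) : ℤ) : ℂ) = -1 := by
      rw [Int.sign_eq_neg_one_of_neg (sub_neg.mpr (by exact_mod_cast hji))]
      norm_num
    rw [hs, if_neg hji.ne', zero_smul]
    rw [show -(Complex.I * ↑φ) * (-1 : ℂ) = Complex.I * φ by ring,
      show (Complex.I * ↑φ) * (-1 : ℂ) = -(Complex.I * φ) by ring]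
    refine ⟨?_, ?_, ?_⟩
    · have h := conjT_rel (xi_mul_xiH_comm m φ hji)
      rw [Matrix.conjTranspose_mul, Matrix.conjTranspose_mul, Matrix.conjTranspose_conjTranspose,
        map_neg, conj_Iphi, neg_neg] at h
      exact cancel_rel h
    · have h := flip_rel (xi_mul_xi_comm m φ hji)
      exact cancel_rel h
    · have h := flip_rel (xiH_mul_xiH_comm m φ hji)
      exact cancel_rel h
end

section
/- For the fermionic-anyon matrices on (ℂ²)^{⊗m}, any two modes i < j, and all real θ, the anyonic beam splitter BS_{ij}(θ) = exp(iθ(ξᵢ†ξⱼ + ξⱼ†ξᵢ)) acts on creation operators by the nonlinear conjugation identities: BS_{ij}(θ)·ξᵢ†·BS_{ij}(−θ) = cos θ · ξᵢ† + i·sin θ · ξⱼ†·exp(iφ·ξᵢ†ξᵢ), and BS_{ij}(θ)·ξⱼ†·BS_{ij}(−θ) = cos θ · ξⱼ† + i·sin θ · ξᵢ†·exp(−iφ·ξⱼ†ξⱼ). -/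
open scoped BigOperators
open Matrix

/-- The anyonic beam splitter `BS_{ij}(θ) = exp(iθ(ξᵢ†ξⱼ + ξⱼ†ξᵢ))`. -/
noncomputable def bs (m : ℕ) (φ : ℝ) (i j : Fin m) (θ : ℝ) :
    Matrix (Fin m → Fin 2) (Fin m → Fin 2) ℂ :=
  NormedSpace.exp ((Complex.I * θ) • ((xi m φ i)ᴴ * xi m φ j + (xi m φ j)ᴴ * xi m φ i))

namespace FA

attribute [local instance] Matrix.linftyOpNormedAddCommGroup Matrix.linftyOpNormedRing
  Matrix.linftyOpNormedAlgebra

abbrev Mat2 := Matrix (Fin 2) (Fin 2) ℂ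

variable {m : ℕ}

noncomputable def tens (M : Fin m → Mat2) : Matrix (Fin m → Fin 2) (Fin m → Fin 2) ℂ :=
  Matrix.of fun r c => ∏ k, M k (r k) (c k)

lemma tens_mul (M N : Fin m → Mat2) : tens M * tens N = tens fun k => M k * N k := by
  ext r c
  simp only [tens, Matrix.mul_apply, Matrix.of_apply]
  rw [Finset.prod_univ_sum, Fintype.piFinset_univ]
  exact Finset.sum_congr rfl fun f _ => (Finset.prod_mul_distrib).symm

lemma tens_conjTranspose (M : Fin m → Mat2) : (tens M)ᴴ = tens fun k => (M k)ᴴ := by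
  ext r c
  simp [tens, Matrix.conjTranspose_apply, map_prod]

lemma tens_one : tens (fun _ : Fin m => (1 : Mat2)) = 1 := by
  ext r c
  rcases eq_or_ne r c with rfl | h
  · simp [tens, Matrix.one_apply]
  · obtain ⟨k, hk⟩ := Function.ne_iff.mp h
    simp only [tens, Matrix.of_apply, Matrix.one_apply, if_neg h]
    exact Finset.prod_eq_zero (Finset.mem_univ k) (by simp [Matrix.one_apply, hk])

lemma tens_zero_site (s : Fin m) (M : Fin m → Mat2) (h : M s = 0) : tens M = 0 := by
  ext r c
  exact Finset.prod_eq_zero (Finset.mem_univ s) (by simp [h])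

lemma tens_update_apply (M : Fin m → Mat2) (s : Fin m) (A : Mat2) (r c : Fin m → Fin 2) :
    tens (Function.update M s A) r c
      = A (r s) (c s) * ∏ k ∈ Finset.univ \ {s}, M k (r k) (c k) := by
  have h : ∀ k, (Function.update M s A) k (r k) (c k)
      = Function.update (fun k => M k (r k) (c k)) s (A (r s) (c s)) k := by
    intro k
    rcases eq_or_ne k s with rfl | h
    · simp
    · simp [Function.update_of_ne h]
  simp only [tens, Matrix.of_apply]
  rw [Finset.prod_congr rfl fun k _ => h k, Finset.prod_update_of_mem (Finset.mem_univ s)]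

lemma tens_update_add (M : Fin m → Mat2) (s : Fin m) (A B : Mat2) :
    tens (Function.update M s (A + B))
      = tens (Function.update M s A) + tens (Function.update M s B) := by
  ext r c
  simp [tens_update_apply, Matrix.add_apply, add_mul]

lemma tens_update_sub (M : Fin m → Mat2) (s : Fin m) (A B : Mat2) :
    tens (Function.update M s A) - tens (Function.update M s B)
      = tens (Function.update M s (A - B)) := by
  ext r c
  simp [tens_update_apply, Matrix.sub_apply, sub_mul]

lemma tens_update_smul (M : Fin m → Mat2) (s : Fin m) (z : ℂ) (A : Mat2) :
    tens (Function.update M s (z • A)) = z • tens (Function.update M s A) := by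
  ext r c
  simp [tens_update_apply, Matrix.smul_apply, smul_eq_mul, mul_assoc]


section Sites
variable {m : ℕ}

/-- A 5-region site function for two marked modes `i < j`. -/
def sites (i j : Fin m) (L X Md Y R : Mat2) : Fin m → Mat2 := fun k =>
  if k < i then L else if k = i then X else if k < j then Md else if k = j then Y else R

variable {i j : Fin m}

lemma sites_apply_i (L X Md Y R : Mat2) : sites i j L X Md Y R i = X := by
  simp [sites]

lemma sites_apply_j (hij : i < j) (L X Md Y R : Mat2) : sites i j L X Md Y R j = Y := by
  simp [sites, lt_asymm hij, hij.ne', lt_irrefl]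

lemma sites_update_i (L X X' Md Y R : Mat2) :
    Function.update (sites i j L X Md Y R) i X' = sites i j L X' Md Y R := by
  funext k
  rcases eq_or_ne k i with rfl | h
  · simp [sites]
  · simp only [Function.update_of_ne h, sites, if_neg h]

lemma sites_update_j (hij : i < j) (L X Md Y Y' R : Mat2) :
    Function.update (sites i j L X Md Y R) j Y' = sites i j L X Md Y' R := by
  funext k
  rcases eq_or_ne k j with rfl | h
  · simp [sites, lt_asymm hij, hij.ne', lt_irrefl]
  · simp only [Function.update_of_ne h, sites, if_neg h]

lemma sites_mul (L X Md Y R L' X' Md' Y' R' : Mat2) :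
    (fun k => sites i j L X Md Y R k * sites i j L' X' Md' Y' R' k)
      = sites i j (L * L') (X * X') (Md * Md') (Y * Y') (R * R') := by
  funext k
  simp only [sites]
  split_ifs <;> rfl

lemma sites_conjT (L X Md Y R : Mat2) :
    (fun k => (sites i j L X Md Y R k)ᴴ) = sites i j Lᴴ Xᴴ Mdᴴ Yᴴ Rᴴ := by
  funext k
  simp only [sites]
  split_ifs <;> rfl

lemma tens_sites_X0 (L Md Y R : Mat2) : tens (sites i j L 0 Md Y R) = 0 :=
  tens_zero_site i _ (sites_apply_i _ _ _ _ _)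

lemma tens_sites_Y0 (hij : i < j) (L X Md R : Mat2) : tens (sites i j L X Md 0 R) = 0 :=
  tens_zero_site j _ (sites_apply_j hij _ _ _ _ _)

lemma tens_sites_sub_i (L X X' Md Y R : Mat2) :
    tens (sites i j L X Md Y R) - tens (sites i j L X' Md Y R)
      = tens (sites i j L (X - X') Md Y R) := by
  rw [← sites_update_i L X X Md Y R, ← sites_update_i L X X' Md Y R,
    tens_update_sub, sites_update_i]

lemma tens_sites_smul_i (z : ℂ) (L X Md Y R : Mat2) :
    tens (sites i j L (z • X) Md Y R) = z • tens (sites i j L X Md Y R) := by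
  rw [← sites_update_i L X (z • X) Md Y R, tens_update_smul, sites_update_i]

lemma tens_sites_smul_j (hij : i < j) (z : ℂ) (L X Md Y R : Mat2) :
    tens (sites i j L X Md (z • Y) R) = z • tens (sites i j L X Md Y R) := by
  rw [← sites_update_j hij L X Md Y (z • Y), tens_update_smul, sites_update_j hij]

lemma tens_sites_sub_j (hij : i < j) (L X Md Y Y' R : Mat2) :
    tens (sites i j L X Md Y R) - tens (sites i j L X Md Y' R)
      = tens (sites i j L X Md (Y - Y') R) := by
  rw [← sites_update_j hij L X Md Y Y, ← sites_update_j hij L X Md Y Y',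
    tens_update_sub, sites_update_j hij]

end Sites
section TwoByTwo
variable (φ : ℝ)

noncomputable def DhM : Mat2 := !![1, 0; 0, -Complex.exp (-(Complex.I * φ))]
def sgT : Mat2 := !![0, 0; 1, 0]
def P0M : Mat2 := !![1, 0; 0, 0]
def P1M : Mat2 := !![0, 0; 0, 1]
def ZM : Mat2 := !![1, 0; 0, -1]
noncomputable def EM : Mat2 := !![1, 0; 0, Complex.exp (Complex.I * φ)]
noncomputable def FM : Mat2 := !![1, 0; 0, Complex.exp (-(Complex.I * φ))]

lemma expIneg : Complex.exp (-(Complex.I * φ)) * Complex.exp (Complex.I * φ) = 1 := by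
  rw [← Complex.exp_add, neg_add_cancel, Complex.exp_zero]

lemma expIneg' : Complex.exp (Complex.I * φ) * Complex.exp (-(Complex.I * φ)) = 1 := by
  rw [← Complex.exp_add, add_neg_cancel, Complex.exp_zero]

lemma dMat_conjT : (dMat φ)ᴴ = DhM φ := by
  ext a b
  fin_cases a <;> fin_cases b <;>
    simp [dMat, DhM, Matrix.conjTranspose_apply, ← Complex.exp_conj, _root_.map_mul, Complex.conj_I,
      Complex.conj_ofReal]

lemma sigMat_conjT : sigMatᴴ = sgT := by
  ext a b
  fin_cases a <;> fin_cases b <;> simp [sigMat, sgT, Matrix.conjTranspose_apply]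

lemma mDhD : DhM φ * dMat φ = 1 := by
  ext a b
  fin_cases a <;> fin_cases b <;>
    simp [DhM, dMat, Matrix.mul_apply, Fin.sum_univ_two, Matrix.one_apply, expIneg]

lemma mDDh : dMat φ * DhM φ = 1 := by
  ext a b
  fin_cases a <;> fin_cases b <;>
    simp [DhM, dMat, Matrix.mul_apply, Fin.sum_univ_two, Matrix.one_apply, expIneg']

lemma msgTD : sgT * dMat φ = sgT := by
  ext a b
  fin_cases a <;> fin_cases b <;> simp [sgT, dMat, Matrix.mul_apply, Fin.sum_univ_two]

lemma mDhsg : DhM φ * sigMat = sigMat := by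
  ext a b
  fin_cases a <;> fin_cases b <;> simp [sgT, sigMat, DhM, Matrix.mul_apply, Fin.sum_univ_two]

lemma msgTsg : sgT * sigMat = P1M := by
  ext a b
  fin_cases a <;> fin_cases b <;> simp [sgT, sigMat, P1M, Matrix.mul_apply, Fin.sum_univ_two]

lemma msgsgT : sigMat * sgT = P0M := by
  ext a b
  fin_cases a <;> fin_cases b <;> simp [sgT, sigMat, P0M, Matrix.mul_apply, Fin.sum_univ_two]

lemma msgTsgT : sgT * sgT = 0 := by
  ext a b
  fin_cases a <;> fin_cases b <;> simp [sgT, Matrix.mul_apply, Fin.sum_univ_two]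

lemma mDhE : DhM φ * EM φ = ZM := by
  ext a b
  fin_cases a <;> fin_cases b <;>
    simp [DhM, EM, ZM, Matrix.mul_apply, Fin.sum_univ_two, expIneg]

lemma msgTZ : sgT * ZM = sgT := by
  ext a b
  fin_cases a <;> fin_cases b <;> simp [sgT, ZM, Matrix.mul_apply, Fin.sum_univ_two]

lemma mZsgT : ZM * sgT = (-1 : ℂ) • sgT := by
  ext a b
  fin_cases a <;> fin_cases b <;> simp [sgT, ZM, Matrix.mul_apply, Fin.sum_univ_two]

lemma P0subP1 : P0M - P1M = ZM := by
  ext a b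
  fin_cases a <;> fin_cases b <;> simp [P0M, P1M, ZM]

lemma msgTDh : sgT * DhM φ = sgT := by
  ext a b
  fin_cases a <;> fin_cases b <;> simp [sgT, DhM, Matrix.mul_apply, Fin.sum_univ_two]

lemma mDhsgT : DhM φ * sgT = (-Complex.exp (-(Complex.I * φ))) • sgT := by
  ext a b
  fin_cases a <;> fin_cases b <;> simp [sgT, DhM, Matrix.mul_apply, Fin.sum_univ_two]

lemma P0addP1 : P0M + P1M = 1 := by
  ext a b
  fin_cases a <;> fin_cases b <;> simp [P0M, P1M, Matrix.one_apply]

lemma P0subzP1 : P0M - (-Complex.exp (-(Complex.I * φ))) • P1M = FM φ := by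
  ext a b
  fin_cases a <;> fin_cases b <;> simp [P0M, P1M, FM]

lemma msgTF : sgT * FM φ = sgT := by
  ext a b
  fin_cases a <;> fin_cases b <;> simp [sgT, FM, Matrix.mul_apply, Fin.sum_univ_two]

lemma mFsgT : FM φ * sgT = (Complex.exp (-(Complex.I * φ))) • sgT := by
  ext a b
  fin_cases a <;> fin_cases b <;> simp [sgT, FM, Matrix.mul_apply, Fin.sum_univ_two]

lemma P0subzP1' : P0M - (Complex.exp (-(Complex.I * φ))) • P1M = DhM φ := by
  ext a b
  fin_cases a <;> fin_cases b <;> simp [P0M, P1M, DhM]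

end TwoByTwo
section XiSites
variable {m : ℕ} (φ : ℝ) {i j : Fin m}

lemma xi_i_sites (hij : i < j) : xi m φ i = tens (sites i j (dMat φ) sigMat 1 1 1) := by
  ext r c
  simp only [xi, tens, Matrix.of_apply]
  refine Finset.prod_congr rfl fun k _ => ?_
  by_cases h1 : k < i
  · simp [sites, h1]
  · by_cases h2 : k = i
    · simp [sites, h1, h2]
    · simp only [sites, if_neg h1, if_neg h2]
      split_ifs <;> simp_all [Matrix.one_apply]

lemma xi_j_sites (hij : i < j) :
    xi m φ j = tens (sites i j (dMat φ) (dMat φ) (dMat φ) sigMat 1) := by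
  ext r c
  simp only [xi, tens, Matrix.of_apply]
  refine Finset.prod_congr rfl fun k _ => ?_
  by_cases h1 : k < i
  · simp [sites, h1, h1.trans hij, (h1.trans hij).ne]
  · by_cases h2 : k = i
    · subst h2; simp [sites, h1, hij, hij.ne]
    · by_cases h3 : k < j
      · simp [sites, h1, h2, h3, h3.ne]
      · by_cases h4 : k = j
        · subst h4
          simp [sites, lt_asymm hij, hij.ne', lt_irrefl]
        · simp [sites, if_neg h1, if_neg h2, if_neg h3, if_neg h4, Matrix.one_apply]

lemma xi_i_conjT_sites (hij : i < j) :
    (xi m φ i)ᴴ = tens (sites i j (DhM φ) sgT 1 1 1) := by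
  rw [xi_i_sites φ hij, tens_conjTranspose, sites_conjT, dMat_conjT, sigMat_conjT,
    Matrix.conjTranspose_one]

lemma xi_j_conjT_sites (hij : i < j) :
    (xi m φ j)ᴴ = tens (sites i j (DhM φ) (DhM φ) (DhM φ) sgT 1) := by
  rw [xi_j_sites φ hij, tens_conjTranspose, sites_conjT, dMat_conjT, sigMat_conjT,
    Matrix.conjTranspose_one]

end XiSites

section Je
variable {m : ℕ}

lemma update_one_eq (s : Fin m) :
    Function.update (fun _ : Fin m => (1 : Mat2)) s 1 = fun _ => 1 := by
  funext k
  rcases eq_or_ne k s with rfl | h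
  · simp
  · simp [Function.update_of_ne h]

/-- Embedding of a single-site operator as a ring hom. -/
noncomputable def je (s : Fin m) :
    Mat2 →+* Matrix (Fin m → Fin 2) (Fin m → Fin 2) ℂ where
  toFun A := tens (Function.update (fun _ => 1) s A)
  map_one' := by
    show tens (Function.update (fun _ => (1 : Mat2)) s 1) = 1
    rw [update_one_eq, tens_one]
  map_mul' A B := by
    show tens _ = tens _ * tens _
    rw [tens_mul]
    refine congrArg tens (funext fun k => ?_)
    rcases eq_or_ne k s with rfl | h
    · simp
    · simp [Function.update_of_ne h]
  map_zero' := tens_zero_site s _ (by simp)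
  map_add' A B := tens_update_add _ _ _ _

lemma je_apply (s : Fin m) (A : Mat2) :
    je s A = tens (Function.update (fun _ => 1) s A) := rfl

lemma je_smul (s : Fin m) (z : ℂ) (A : Mat2) : je s (z • A) = z • je s A :=
  tens_update_smul _ _ _ _

lemma je_cont (s : Fin m) : Continuous (je s) := by
  let L : Mat2 →ₗ[ℂ] Matrix (Fin m → Fin 2) (Fin m → Fin 2) ℂ :=
    { toFun := fun A => tens (Function.update (fun _ => 1) s A)
      map_add' := fun A B => tens_update_add _ _ _ _
      map_smul' := fun z A => tens_update_smul _ _ _ _ }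
  exact L.continuous_of_finiteDimensional

lemma exp_je (s : Fin m) (A : Mat2) :
    NormedSpace.exp (je s A) = je s (NormedSpace.exp A) :=
  (NormedSpace.map_exp (je s) (je_cont s) A).symm

lemma exp_smulP1 (z : ℂ) :
    NormedSpace.exp (z • P1M) = !![1, 0; 0, Complex.exp z] := by
  have h : z • P1M = Matrix.diagonal ![0, z] := by
    ext a b
    fin_cases a <;> fin_cases b <;> simp [P1M, Matrix.diagonal]
  rw [h, Matrix.exp_diagonal]
  ext a b
  fin_cases a <;> fin_cases b <;>
    simp [Matrix.diagonal, ← Complex.exp_eq_exp_ℂ, Complex.exp_zero]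

lemma exp_nsite (s : Fin m) (z : ℂ) :
    NormedSpace.exp (z • je s P1M) = je s !![1, 0; 0, Complex.exp z] := by
  rw [← je_smul, exp_je, exp_smulP1]

end Je
section Rot

variable {n : Type*} [Fintype n] [DecidableEq n]

local notation "Mat" => Matrix n n ℂ

lemma exp_real (X : Mat) : NormedSpace.exp X = NormedSpace.exp X := by
  rfl

lemma rot_conj (A B C : Mat) (hB : A * B - B * A = C) (hC : A * C - C * A = -B) (θ : ℝ) :
    NormedSpace.exp (θ • A) * B * NormedSpace.exp ((-θ) • A)
      = Real.cos θ • B + Real.sin θ • C := by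
  rw [exp_real, exp_real]
  set M : ℝ → Mat := fun t => Real.cos t • B + Real.sin t • C with hM
  set f : ℝ → Mat := fun t => NormedSpace.exp ((-t) • A) * M t * NormedSpace.exp (t • A)
    with hf
  have hkey : ∀ t : ℝ, (-A) * M t + ((-Real.sin t) • B + Real.cos t • C) + M t * A = 0 := by
    intro t
    have hAB : A * B = C + B * A := sub_eq_iff_eq_add.mp hB
    have hAC : A * C = -B + C * A := sub_eq_iff_eq_add.mp hC
    simp only [hM, mul_add, add_mul, mul_smul_comm, smul_mul_assoc, neg_mul, hAB, hAC]
    module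
  have hderiv : ∀ t : ℝ, HasDerivAt f 0 t := by
    intro t
    have h1 : HasDerivAt (fun u : ℝ => NormedSpace.exp (u • A))
        (A * NormedSpace.exp (t • A)) t := hasDerivAt_exp_smul_const' A t
    have h2 : HasDerivAt (fun u : ℝ => NormedSpace.exp ((-u) • A))
        (NormedSpace.exp ((-t) • A) * (-A)) t := by
      have h2' := hasDerivAt_exp_smul_const (-A) t
      simp only [neg_smul, smul_neg, mul_neg] at h2' ⊢
      exact h2'
    have h3 : HasDerivAt M ((-Real.sin t) • B + Real.cos t • C) t := by
      have hc : HasDerivAt (fun u : ℝ => Real.cos u • B) ((-Real.sin t) • B) t :=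
        (Real.hasDerivAt_cos t).smul_const B
      have hs : HasDerivAt (fun u : ℝ => Real.sin u • C) (Real.cos t • C) t :=
        (Real.hasDerivAt_sin t).smul_const C
      exact hc.add hs
    have h4 := (h2.mul h3).mul h1
    have hzero :
        (NormedSpace.exp ((-t) • A) * (-A) * M t
            + NormedSpace.exp ((-t) • A) * ((-Real.sin t) • B + Real.cos t • C))
              * NormedSpace.exp (t • A)
          + NormedSpace.exp ((-t) • A) * M t * (A * NormedSpace.exp (t • A)) = 0 := by
      have expand :
          (NormedSpace.exp ((-t) • A) * (-A) * M t
              + NormedSpace.exp ((-t) • A) * ((-Real.sin t) • B + Real.cos t • C))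
                * NormedSpace.exp (t • A)
            + NormedSpace.exp ((-t) • A) * M t * (A * NormedSpace.exp (t • A))
          = NormedSpace.exp ((-t) • A)
              * ((-A) * M t + ((-Real.sin t) • B + Real.cos t • C) + M t * A)
              * NormedSpace.exp (t • A) := by
        noncomm_ring
      rw [expand, hkey t, mul_zero, zero_mul]
    rw [← hzero]
    exact h4
  have hconst : f θ = f 0 :=
    is_const_of_deriv_eq_zero (fun t => (hderiv t).differentiableAt)
      (fun t => (hderiv t).deriv) θ 0
  have hf0 : f 0 = B := by
    simp [hf, hM, NormedSpace.exp_zero]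
  have hfθ : NormedSpace.exp ((-θ) • A) * M θ * NormedSpace.exp (θ • A) = B :=
    hconst.trans hf0
  have hcomm : Commute (θ • A) ((-θ) • A) :=
    ((Commute.refl A).smul_left θ).smul_right (-θ)
  have hinv1 : NormedSpace.exp (θ • A) * NormedSpace.exp ((-θ) • A) = 1 := by
    have e := NormedSpace.exp_add_of_commute hcomm
    rw [← add_smul, add_neg_cancel, zero_smul, NormedSpace.exp_zero] at e
    exact e.symm
  conv_lhs => rw [← hfθ]
  have regroup :
      NormedSpace.exp (θ • A)
          * (NormedSpace.exp ((-θ) • A) * M θ * NormedSpace.exp (θ • A))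
          * NormedSpace.exp ((-θ) • A)
        = (NormedSpace.exp (θ • A) * NormedSpace.exp ((-θ) • A)) * M θ
            * (NormedSpace.exp (θ • A) * NormedSpace.exp ((-θ) • A)) := by
    noncomm_ring
  rw [regroup, hinv1, one_mul, mul_one]

end Rot
section MainHelpers
variable {m : ℕ}

lemma P0subNegP1 : P0M - (-1 : ℂ) • P1M = (1 : Mat2) := by
  ext a b
  fin_cases a <;> fin_cases b <;> simp [P0M, P1M, Matrix.one_apply]

lemma sites_const_i {i j : Fin m} (X : Mat2) :
    sites i j 1 X 1 1 1 = Function.update (fun _ => (1 : Mat2)) i X := by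
  funext k
  rcases eq_or_ne k i with rfl | h
  · simp [sites]
  · simp only [Function.update_of_ne h, sites, if_neg h]
    split_ifs <;> rfl

lemma sites_const_j {i j : Fin m} (hij : i < j) (Y : Mat2) :
    sites i j 1 1 1 Y 1 = Function.update (fun _ => (1 : Mat2)) j Y := by
  funext k
  rcases eq_or_ne k j with rfl | h
  · simp [sites, lt_asymm hij, hij.ne', lt_irrefl]
  · simp only [Function.update_of_ne h, sites, if_neg h]
    split_ifs <;> rfl

end MainHelpers

lemma main (m : ℕ) (φ : ℝ) (i j : Fin m) (hij : i < j) (θ : ℝ) :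
    (bs m φ i j θ * (xi m φ i)ᴴ * bs m φ i j (-θ)
      = ((Real.cos θ : ℂ)) • (xi m φ i)ᴴ
        + (Complex.I * Real.sin θ) •
            ((xi m φ j)ᴴ * NormedSpace.exp ((Complex.I * φ) • ((xi m φ i)ᴴ * xi m φ i)))) ∧
    (bs m φ i j θ * (xi m φ j)ᴴ * bs m φ i j (-θ)
      = ((Real.cos θ : ℂ)) • (xi m φ j)ᴴ
        + (Complex.I * Real.sin θ) •
            ((xi m φ i)ᴴ *
              NormedSpace.exp ((-(Complex.I * φ)) • ((xi m φ j)ᴴ * xi m φ j)))) := by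
  have hH1 : (xi m φ i)ᴴ * xi m φ j = tens (sites i j 1 sgT (dMat φ) sigMat 1) := by
    rw [xi_i_conjT_sites φ hij, xi_j_sites φ hij, tens_mul, sites_mul, mDhD, msgTD]
    simp only [one_mul, mul_one]
  have hH2 : (xi m φ j)ᴴ * xi m φ i = tens (sites i j 1 sigMat (DhM φ) sgT 1) := by
    rw [xi_j_conjT_sites φ hij, xi_i_sites φ hij, tens_mul, sites_mul, mDhD, mDhsg]
    simp only [one_mul, mul_one]
  have hNi : (xi m φ i)ᴴ * xi m φ i = je i P1M := by
    rw [xi_i_conjT_sites φ hij, xi_i_sites φ hij, tens_mul, sites_mul, mDhD, msgTsg]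
    simp only [one_mul, mul_one]
    rw [je_apply, sites_const_i]
  have hNj : (xi m φ j)ᴴ * xi m φ j = je j P1M := by
    rw [xi_j_conjT_sites φ hij, xi_j_sites φ hij, tens_mul, sites_mul]
    simp only [mDhD, msgTsg, one_mul, mul_one]
    rw [je_apply, sites_const_j hij]
  have hEi : NormedSpace.exp ((Complex.I * φ) • ((xi m φ i)ᴴ * xi m φ i))
      = tens (sites i j 1 (EM φ) 1 1 1) := by
    rw [hNi, exp_nsite, je_apply, ← sites_const_i]
    rfl
  have hEj : NormedSpace.exp ((-(Complex.I * φ)) • ((xi m φ j)ᴴ * xi m φ j))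
      = tens (sites i j 1 1 1 (FM φ) 1) := by
    rw [hNj, exp_nsite, je_apply, ← sites_const_j hij]
    rfl
  have hc1 : (xi m φ j)ᴴ * NormedSpace.exp ((Complex.I * φ) • ((xi m φ i)ᴴ * xi m φ i))
      = tens (sites i j (DhM φ) ZM (DhM φ) sgT 1) := by
    rw [hEi, xi_j_conjT_sites φ hij, tens_mul, sites_mul, mDhE]
    simp only [one_mul, mul_one]
  have hc2 : (xi m φ i)ᴴ * NormedSpace.exp ((-(Complex.I * φ)) • ((xi m φ j)ᴴ * xi m φ j))
      = tens (sites i j (DhM φ) sgT 1 (FM φ) 1) := by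
    rw [hEj, xi_i_conjT_sites φ hij, tens_mul, sites_mul]
    simp only [one_mul, mul_one]
  set H := (xi m φ i)ᴴ * xi m φ j + (xi m φ j)ᴴ * xi m φ i with hH
  have K1 : H * (xi m φ i)ᴴ - (xi m φ i)ᴴ * H
      = tens (sites i j (DhM φ) ZM (DhM φ) sgT 1) := by
    rw [hH, hH1, hH2, xi_i_conjT_sites φ hij, add_mul, mul_add, tens_mul, tens_mul, tens_mul,
      tens_mul, sites_mul, sites_mul, sites_mul, sites_mul]
    simp only [one_mul, mul_one, msgTsgT, msgsgT, msgTsg]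
    rw [tens_sites_X0, zero_add, zero_add, tens_sites_sub_i, P0subP1]
  have K2 : H * tens (sites i j (DhM φ) ZM (DhM φ) sgT 1)
      - tens (sites i j (DhM φ) ZM (DhM φ) sgT 1) * H = (xi m φ i)ᴴ := by
    rw [hH, hH1, hH2, xi_i_conjT_sites φ hij, add_mul, mul_add, tens_mul, tens_mul, tens_mul,
      tens_mul, sites_mul, sites_mul, sites_mul, sites_mul]
    simp only [one_mul, mul_one, msgTZ, mDDh, msgsgT, mZsgT, mDhD, msgTsg, msgTsgT]
    rw [tens_sites_Y0 hij, tens_sites_Y0 hij, add_zero, add_zero,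
      tens_sites_smul_i, ← tens_sites_smul_j hij, tens_sites_sub_j hij, P0subNegP1]
  have K3 : H * (xi m φ j)ᴴ - (xi m φ j)ᴴ * H
      = tens (sites i j (DhM φ) sgT 1 (FM φ) 1) := by
    rw [hH, hH1, hH2, xi_j_conjT_sites φ hij, add_mul, mul_add, tens_mul, tens_mul, tens_mul,
      tens_mul, sites_mul, sites_mul, sites_mul, sites_mul]
    simp only [one_mul, mul_one, msgTDh, mDDh, msgsgT, mDhsgT, mDhD, msgTsg, msgTsgT]
    rw [tens_sites_Y0 hij, tens_sites_Y0 hij, add_zero, add_zero,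
      tens_sites_smul_i, ← tens_sites_smul_j hij, tens_sites_sub_j hij, P0subzP1]
  have K4 : H * tens (sites i j (DhM φ) sgT 1 (FM φ) 1)
      - tens (sites i j (DhM φ) sgT 1 (FM φ) 1) * H = (xi m φ j)ᴴ := by
    rw [hH, hH1, hH2, xi_j_conjT_sites φ hij, add_mul, mul_add, tens_mul, tens_mul, tens_mul,
      tens_mul, sites_mul, sites_mul, sites_mul, sites_mul]
    simp only [one_mul, mul_one, msgTsgT, msgsgT, msgTF, msgTsg, mFsgT]
    rw [tens_sites_X0, tens_sites_X0, zero_add, zero_add,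
      tens_sites_smul_j hij, ← tens_sites_smul_i, tens_sites_sub_i, P0subzP1']
  set Amat := Complex.I • H with hA
  have hbs : ∀ t : ℝ, bs m φ i j t = NormedSpace.exp (t • Amat) := by
    intro t
    simp only [bs]
    rw [← hH, hA]
    congr 1
    ext a b
    simp [Matrix.smul_apply, smul_eq_mul, Complex.real_smul]
    ring
  constructor
  · -- mode i
    have hB1 : Amat * (xi m φ i)ᴴ - (xi m φ i)ᴴ * Amat
        = Complex.I • tens (sites i j (DhM φ) ZM (DhM φ) sgT 1) := by
      rw [hA, smul_mul_assoc, mul_smul_comm, ← smul_sub, K1]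
    have hC1 : Amat * (Complex.I • tens (sites i j (DhM φ) ZM (DhM φ) sgT 1))
        - (Complex.I • tens (sites i j (DhM φ) ZM (DhM φ) sgT 1)) * Amat
        = -(xi m φ i)ᴴ := by
      rw [hA, smul_mul_assoc, smul_mul_assoc, mul_smul_comm, mul_smul_comm, smul_smul,
        smul_smul, ← smul_sub, K2, Complex.I_mul_I, neg_one_smul]
    rw [hbs θ, hbs (-θ), hc1]
    have e1 : ((Real.cos θ : ℂ)) • (xi m φ i)ᴴ = Real.cos θ • (xi m φ i)ᴴ := by
      ext a b
      simp [Matrix.smul_apply, smul_eq_mul, Complex.real_smul]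
    have e2 : (Complex.I * (Real.sin θ : ℂ)) • tens (sites i j (DhM φ) ZM (DhM φ) sgT 1)
        = Real.sin θ • (Complex.I • tens (sites i j (DhM φ) ZM (DhM φ) sgT 1)) := by
      ext a b
      simp [Matrix.smul_apply, smul_eq_mul, Complex.real_smul]
      ring
    rw [e1, e2]
    exact rot_conj Amat ((xi m φ i)ᴴ) _ hB1 hC1 θ
  · -- mode j
    have hB2 : Amat * (xi m φ j)ᴴ - (xi m φ j)ᴴ * Amat
        = Complex.I • tens (sites i j (DhM φ) sgT 1 (FM φ) 1) := by
      rw [hA, smul_mul_assoc, mul_smul_comm, ← smul_sub, K3]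
    have hC2 : Amat * (Complex.I • tens (sites i j (DhM φ) sgT 1 (FM φ) 1))
        - (Complex.I • tens (sites i j (DhM φ) sgT 1 (FM φ) 1)) * Amat
        = -(xi m φ j)ᴴ := by
      rw [hA, smul_mul_assoc, smul_mul_assoc, mul_smul_comm, mul_smul_comm, smul_smul,
        smul_smul, ← smul_sub, K4, Complex.I_mul_I, neg_one_smul]
    rw [hbs θ, hbs (-θ), hc2]
    have e1 : ((Real.cos θ : ℂ)) • (xi m φ j)ᴴ = Real.cos θ • (xi m φ j)ᴴ := by
      ext a b
      simp [Matrix.smul_apply, smul_eq_mul, Complex.real_smul]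
    have e2 : (Complex.I * (Real.sin θ : ℂ)) • tens (sites i j (DhM φ) sgT 1 (FM φ) 1)
        = Real.sin θ • (Complex.I • tens (sites i j (DhM φ) sgT 1 (FM φ) 1)) := by
      ext a b
      simp [Matrix.smul_apply, smul_eq_mul, Complex.real_smul]
      ring
    rw [e1, e2]
    exact rot_conj Amat ((xi m φ j)ᴴ) _ hB2 hC2 θ

end FA

/-- **Nonlinear conjugation identities for the fermionic-anyon beam splitter.** For modes
`i < j` and real `θ`:
`BS_{ij}(θ)·ξᵢ†·BS_{ij}(−θ) = cos θ·ξᵢ† + i·sin θ·ξⱼ†·exp(iφ·ξᵢ†ξᵢ)` and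
`BS_{ij}(θ)·ξⱼ†·BS_{ij}(−θ) = cos θ·ξⱼ† + i·sin θ·ξᵢ†·exp(−iφ·ξⱼ†ξⱼ)`. -/
theorem fermionic_anyon_bs_conjugation (m : ℕ) (φ : ℝ) (i j : Fin m) (hij : i < j)
    (θ : ℝ) :
    (bs m φ i j θ * (xi m φ i)ᴴ * bs m φ i j (-θ)
      = ((Real.cos θ : ℂ)) • (xi m φ i)ᴴ
        + (Complex.I * Real.sin θ) •
            ((xi m φ j)ᴴ * NormedSpace.exp ((Complex.I * φ) • ((xi m φ i)ᴴ * xi m φ i)))) ∧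
    (bs m φ i j θ * (xi m φ j)ᴴ * bs m φ i j (-θ)
      = ((Real.cos θ : ℂ)) • (xi m φ j)ᴴ
        + (Complex.I * Real.sin θ) •
            ((xi m φ i)ᴴ *
              NormedSpace.exp ((-(Complex.I * φ)) • ((xi m φ j)ᴴ * xi m φ j)))) := by
  exact FA.main m φ i j hij θ
end

section
/- For the fermionic-anyon matrices on (ℂ²)^{⊗m}, fix modes i < k < j and real numbers θ, t. Define J³ = (1/2)(ξᵢ†ξᵢ − ξⱼ†ξⱼ), BS_{ij}(θ) = exp(iθ(ξᵢ†ξⱼ + ξⱼ†ξᵢ)), and the twisted beam splitter G^t_{ij}(θ) = exp(it·J³)·BS_{ij}(θ)·exp(−it·J³). Then propagating the intermediate-mode creation operator through the twisted beam splitter shifts its twist by 2φ: G^t_{ij}(θ)·ξ_k† = ξ_k†·G^{t+2φ}_{ij}(θ). -/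
open scoped BigOperators
open Matrix

/-- `J³ = (1/2)(ξᵢ†ξᵢ − ξⱼ†ξⱼ)`. -/
noncomputable def j3 (m : ℕ) (φ : ℝ) (i j : Fin m) :
    Matrix (Fin m → Fin 2) (Fin m → Fin 2) ℂ :=
  (1 / 2 : ℂ) • ((xi m φ i)ᴴ * xi m φ i - (xi m φ j)ᴴ * xi m φ j)

/-- The twisted beam splitter `G^t_{ij}(θ) = exp(it·J³)·BS_{ij}(θ)·exp(−it·J³)`. -/
noncomputable def twistedBS (m : ℕ) (φ : ℝ) (i j : Fin m) (t θ : ℝ) :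
    Matrix (Fin m → Fin 2) (Fin m → Fin 2) ℂ :=
  NormedSpace.exp ((Complex.I * t) • j3 m φ i j) * bs m φ i j θ *
    NormedSpace.exp ((-(Complex.I * t)) • j3 m φ i j)

namespace FAaux

noncomputable def kron (m : ℕ) (f : Fin m → Matrix (Fin 2) (Fin 2) ℂ) :
    Matrix (Fin m → Fin 2) (Fin m → Fin 2) ℂ :=
  Matrix.of fun r c => ∏ s : Fin m, f s (r s) (c s)

variable {m : ℕ}

lemma kron_mul (f g : Fin m → Matrix (Fin 2) (Fin 2) ℂ) :
    kron m f * kron m g = kron m fun s => f s * g s := by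
  ext r c
  simp only [kron, Matrix.mul_apply, Matrix.of_apply]
  rw [Finset.prod_univ_sum, Fintype.piFinset_univ]
  exact Finset.sum_congr rfl fun x _ => (Finset.prod_mul_distrib).symm

lemma kron_conjTranspose (f : Fin m → Matrix (Fin 2) (Fin 2) ℂ) :
    (kron m f)ᴴ = kron m fun s => (f s)ᴴ := by
  ext r c
  simp only [kron, Matrix.conjTranspose_apply, Matrix.of_apply, star_prod]

lemma kron_smul_of (f g : Fin m → Matrix (Fin 2) (Fin 2) ℂ) (c : Fin m → ℂ)
    (h : ∀ s, f s = c s • g s) :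
    kron m f = (∏ s, c s) • kron m g := by
  ext r c'
  simp only [kron, Matrix.of_apply, Matrix.smul_apply, smul_eq_mul]
  rw [← Finset.prod_mul_distrib]
  exact Finset.prod_congr rfl fun s _ => by rw [h s]; rfl

lemma kron_eq_zero (f : Fin m → Matrix (Fin 2) (Fin 2) ℂ) (s0 : Fin m) (h : f s0 = 0) :
    kron m f = 0 := by
  ext r c
  simp only [kron, Matrix.of_apply, Matrix.zero_apply]
  exact Finset.prod_eq_zero (Finset.mem_univ s0) (by simp [h])

lemma xi_eq (φ : ℝ) (i : Fin m) :
    xi m φ i = kron m fun s => if s < i then dMat φ else if s = i then sigMat else 1 := by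
  ext r c
  simp only [xi, kron, Matrix.of_apply]
  refine Finset.prod_congr rfl fun s _ => ?_
  split_ifs <;> simp_all [Matrix.one_apply]

end FAaux

namespace FAaux

def nMat : Matrix (Fin 2) (Fin 2) ℂ := !![0, 0; 0, 1]

lemma star_e (φ : ℝ) :
    (starRingEnd ℂ) (Complex.exp (Complex.I * φ)) = Complex.exp (-(Complex.I * φ)) := by
  rw [← Complex.exp_conj]
  simp

variable (φ : ℝ)

lemma e1 : (dMat φ)ᴴ * dMat φ = 1 := by
  ext a b
  fin_cases a <;> fin_cases b <;>
    simp [sigMat, dMat, nMat, Matrix.mul_apply, Matrix.conjTranspose_apply, Fin.sum_univ_two,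
      star_e, Matrix.one_apply, ← Complex.exp_add]

lemma e2 : dMat φ * (dMat φ)ᴴ = 1 := by
  ext a b
  fin_cases a <;> fin_cases b <;>
    simp [sigMat, dMat, nMat, Matrix.mul_apply, Matrix.conjTranspose_apply, Fin.sum_univ_two,
      star_e, Matrix.one_apply, ← Complex.exp_add]

lemma e3 : sigMatᴴ * dMat φ = sigMatᴴ := by
  ext a b
  fin_cases a <;> fin_cases b <;>
    simp [sigMat, dMat, Matrix.mul_apply, Matrix.conjTranspose_apply, Fin.sum_univ_two, star_e]

lemma e4 : (dMat φ)ᴴ * sigMat = sigMat := by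
  ext a b
  fin_cases a <;> fin_cases b <;>
    simp [sigMat, dMat, Matrix.mul_apply, Matrix.conjTranspose_apply, Fin.sum_univ_two, star_e]

lemma e5 : sigMatᴴ * (dMat φ)ᴴ = sigMatᴴ := by
  ext a b
  fin_cases a <;> fin_cases b <;>
    simp [sigMat, dMat, Matrix.mul_apply, Matrix.conjTranspose_apply, Fin.sum_univ_two, star_e]

lemma e6 : (dMat φ)ᴴ * sigMatᴴ = (-Complex.exp (-(Complex.I * φ))) • sigMatᴴ := by
  ext a b
  fin_cases a <;> fin_cases b <;>
    simp [sigMat, dMat, Matrix.mul_apply, Matrix.conjTranspose_apply, Fin.sum_univ_two, star_e]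

lemma e7 : dMat φ * sigMatᴴ = (-Complex.exp (Complex.I * φ)) • sigMatᴴ := by
  ext a b
  fin_cases a <;> fin_cases b <;>
    simp [sigMat, dMat, Matrix.mul_apply, Matrix.conjTranspose_apply, Fin.sum_univ_two, star_e]

lemma e8 : sigMat * (dMat φ)ᴴ = (-Complex.exp (-(Complex.I * φ))) • sigMat := by
  ext a b
  fin_cases a <;> fin_cases b <;>
    simp [sigMat, dMat, Matrix.mul_apply, Matrix.conjTranspose_apply, Fin.sum_univ_two, star_e]

lemma e10 : sigMatᴴ * sigMat = nMat := by
  ext a b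
  fin_cases a <;> fin_cases b <;>
    simp [sigMat, nMat, Matrix.mul_apply, Matrix.conjTranspose_apply, Fin.sum_univ_two]

lemma e11 : nMat * (dMat φ)ᴴ = (dMat φ)ᴴ * nMat := by
  ext a b
  fin_cases a <;> fin_cases b <;>
    simp [dMat, nMat, Matrix.mul_apply, Matrix.conjTranspose_apply, Fin.sum_univ_two]

lemma e12 : nMat * sigMatᴴ = sigMatᴴ := by
  ext a b
  fin_cases a <;> fin_cases b <;>
    simp [sigMat, nMat, Matrix.mul_apply, Matrix.conjTranspose_apply, Fin.sum_univ_two]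

lemma e13 : sigMatᴴ * nMat = 0 := by
  ext a b
  fin_cases a <;> fin_cases b <;>
    simp [sigMat, nMat, Matrix.mul_apply, Matrix.conjTranspose_apply, Fin.sum_univ_two]

lemma e14 : nMat * sigMat = 0 := by
  ext a b
  fin_cases a <;> fin_cases b <;>
    simp [sigMat, nMat, Matrix.mul_apply, Fin.sum_univ_two]

lemma e15 : sigMat * nMat = sigMat := by
  ext a b
  fin_cases a <;> fin_cases b <;>
    simp [sigMat, nMat, Matrix.mul_apply, Fin.sum_univ_two]

end FAaux

namespace FAaux

variable {m : ℕ}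

/-- site family for `ξᵢᴴ ξⱼ` (i < j) -/
noncomputable def gm (φ : ℝ) (i j : Fin m) : Fin m → Matrix (Fin 2) (Fin 2) ℂ := fun s =>
  if s < i then 1 else if s = i then sigMatᴴ
  else if s < j then dMat φ else if s = j then sigMat else 1

/-- site family for `ξⱼᴴ ξᵢ` (i < j) -/
noncomputable def gm' (φ : ℝ) (i j : Fin m) : Fin m → Matrix (Fin 2) (Fin 2) ℂ := fun s =>
  if s < i then 1 else if s = i then sigMat
  else if s < j then (dMat φ)ᴴ else if s = j then sigMatᴴ else 1

/-- site family for `ξᵢᴴ ξᵢ` -/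
noncomputable def gn (i : Fin m) : Fin m → Matrix (Fin 2) (Fin 2) ℂ := fun s =>
  if s = i then nMat else 1

/-- site family for `ξₖᴴ` -/
noncomputable def fx (φ : ℝ) (k : Fin m) : Fin m → Matrix (Fin 2) (Fin 2) ℂ := fun s =>
  if s < k then (dMat φ)ᴴ else if s = k then sigMatᴴ else 1

variable (φ : ℝ) {i k j : Fin m}

lemma xiH_eq (k : Fin m) : (xi m φ k)ᴴ = kron m (fx φ k) := by
  rw [xi_eq, kron_conjTranspose]
  refine congrArg (kron m) (funext fun s => ?_)
  simp only [fx]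
  split_ifs <;> simp

lemma xiH_xi_lt (h : i < j) : (xi m φ i)ᴴ * xi m φ j = kron m (gm φ i j) := by
  rw [xi_eq φ i, xi_eq φ j, kron_conjTranspose, kron_mul]
  refine congrArg (kron m) (funext fun s => ?_)
  simp only [gm]
  rcases lt_trichotomy s i with hsi | hsi | hsi
  · simp [hsi, hsi.trans h, e1, ne_of_lt hsi]
  · subst hsi
    simp [h, lt_irrefl, e3]
  · have h1 : ¬ s < i := not_lt_of_gt hsi
    have h2 : s ≠ i := ne_of_gt hsi
    simp [h1, h2]

lemma xiH_xi_gt (h : i < j) : (xi m φ j)ᴴ * xi m φ i = kron m (gm' φ i j) := by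
  rw [xi_eq φ i, xi_eq φ j, kron_conjTranspose, kron_mul]
  refine congrArg (kron m) (funext fun s => ?_)
  simp only [gm']
  rcases lt_trichotomy s i with hsi | hsi | hsi
  · simp [hsi, hsi.trans h, e1, ne_of_lt hsi]
  · subst hsi
    simp [h, lt_irrefl, e4, ne_of_lt h]
  · have h1 : ¬ s < i := not_lt_of_gt hsi
    have h2 : s ≠ i := ne_of_gt hsi
    simp only [h1, h2, if_false, mul_one]
    split_ifs <;> simp

lemma xiH_xi_self (i : Fin m) : (xi m φ i)ᴴ * xi m φ i = kron m (gn i) := by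
  rw [xi_eq φ i, kron_conjTranspose, kron_mul]
  refine congrArg (kron m) (funext fun s => ?_)
  simp only [gn]
  rcases lt_trichotomy s i with hsi | hsi | hsi
  · simp [hsi, e1, ne_of_lt hsi]
  · subst hsi
    simp [lt_irrefl, e10]
  · simp [not_lt_of_gt hsi, ne_of_gt hsi]

lemma prod_pair (hik : i ≠ k) (a b : ℂ) :
    (∏ s : Fin m, if s = i then a else if s = k then b else 1) = a * b := by
  rw [← Finset.mul_prod_erase Finset.univ _ (Finset.mem_univ i),
    ← Finset.mul_prod_erase _ _ (Finset.mem_erase.mpr ⟨Ne.symm hik, Finset.mem_univ k⟩),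
    if_pos rfl, if_neg (Ne.symm hik), if_pos rfl]
  have h1 : ∏ s ∈ (Finset.univ.erase i).erase k,
      (if s = i then a else if s = k then b else 1) = 1 := by
    refine Finset.prod_eq_one fun s hs => ?_
    simp only [Finset.mem_erase] at hs
    simp [hs.1, hs.2.1]
  rw [h1, mul_one]

end FAaux

namespace FAaux

variable {m : ℕ} (φ : ℝ) {i k j : Fin m}

lemma exp_cancel_smul (x : ℂ) (A : Matrix (Fin 2) (Fin 2) ℂ) :
    (-Complex.exp x) • (-Complex.exp (-x)) • A = A := by
  rw [smul_smul, neg_mul_neg, ← Complex.exp_add, add_neg_cancel, Complex.exp_zero, one_smul]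

lemma M_mul_Xk (hik : i < k) (hkj : k < j) :
    ((xi m φ i)ᴴ * xi m φ j) * (xi m φ k)ᴴ =
      (Complex.exp (Complex.I * φ) * Complex.exp (Complex.I * φ)) •
        ((xi m φ k)ᴴ * ((xi m φ i)ᴴ * xi m φ j)) := by
  have hij := hik.trans hkj
  rw [xiH_xi_lt φ hij, xiH_eq φ k, kron_mul, kron_mul]
  have key : ∀ s : Fin m, gm φ i j s * fx φ k s =
      (if s = i then -Complex.exp (Complex.I * φ)
       else if s = k then -Complex.exp (Complex.I * φ) else 1) • (fx φ k s * gm φ i j s) := by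
    intro s
    simp only [gm, fx]
    rcases lt_trichotomy s i with h1 | h1 | h1
    · simp [h1, h1.trans hik, ne_of_lt h1, ne_of_lt (h1.trans hik)]
    · subst h1
      simp only [lt_irrefl, if_false, if_pos rfl, if_pos hik, if_neg (ne_of_lt hik), if_true, ite_true, ite_false]
      rw [e5, e6, exp_cancel_smul]
    · rcases lt_trichotomy s k with h2 | h2 | h2
      · simp only [not_lt_of_gt h1, ne_of_gt h1, h2, h2.trans hkj, if_true, if_false,
          if_neg (ne_of_gt h1), if_neg (ne_of_lt h2), if_pos h2, if_pos (h2.trans hkj), one_smul]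
        rw [e1, e2]
      · subst h2
        simp only [not_lt_of_gt h1, if_neg (ne_of_gt h1), lt_irrefl, if_false, if_pos rfl,
          if_pos hkj, if_true, ite_true, ite_false]
        rw [e7, e3]
      · simp [not_lt_of_gt h2, ne_of_gt h2, not_lt_of_gt h1, ne_of_gt h1]
  rw [kron_smul_of _ _ _ key, prod_pair (ne_of_lt hik), neg_mul_neg]

lemma M'_mul_Xk (hik : i < k) (hkj : k < j) :
    ((xi m φ j)ᴴ * xi m φ i) * (xi m φ k)ᴴ =
      (Complex.exp (-(Complex.I * φ)) * Complex.exp (-(Complex.I * φ))) •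
        ((xi m φ k)ᴴ * ((xi m φ j)ᴴ * xi m φ i)) := by
  have hij := hik.trans hkj
  rw [xiH_xi_gt φ hij, xiH_eq φ k, kron_mul, kron_mul]
  have key : ∀ s : Fin m, gm' φ i j s * fx φ k s =
      (if s = i then -Complex.exp (-(Complex.I * φ))
       else if s = k then -Complex.exp (-(Complex.I * φ)) else 1) •
        (fx φ k s * gm' φ i j s) := by
    intro s
    simp only [gm', fx]
    rcases lt_trichotomy s i with h1 | h1 | h1
    · simp [h1, h1.trans hik, ne_of_lt h1, ne_of_lt (h1.trans hik)]
    · subst h1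
      simp only [lt_irrefl, if_false, if_pos rfl, if_pos hik, if_neg (ne_of_lt hik), if_true, ite_true, ite_false]
      rw [e8, e4]
    · rcases lt_trichotomy s k with h2 | h2 | h2
      · simp [not_lt_of_gt h1, ne_of_gt h1, h2, h2.trans hkj, ne_of_lt h2]
      · subst h2
        simp only [not_lt_of_gt h1, if_neg (ne_of_gt h1), lt_irrefl, if_false, if_pos rfl,
          if_pos hkj, if_true, ite_true, ite_false]
        rw [e6, e5]
      · simp [not_lt_of_gt h2, ne_of_gt h2, not_lt_of_gt h1, ne_of_gt h1]
  rw [kron_smul_of _ _ _ key, prod_pair (ne_of_lt hik), neg_mul_neg]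

lemma P_mul_Xk (hik : i < k) :
    ((xi m φ i)ᴴ * xi m φ i) * (xi m φ k)ᴴ = (xi m φ k)ᴴ * ((xi m φ i)ᴴ * xi m φ i) := by
  rw [xiH_xi_self φ i, xiH_eq φ k, kron_mul, kron_mul]
  refine congrArg (kron m) (funext fun s => ?_)
  simp only [gn, fx]
  by_cases hsi : s = i
  · subst hsi
    simp only [if_pos rfl, if_pos hik]
    exact e11 φ
  · simp [hsi]

lemma Q_mul_Xk (hkj : k < j) :
    ((xi m φ j)ᴴ * xi m φ j) * (xi m φ k)ᴴ = (xi m φ k)ᴴ * ((xi m φ j)ᴴ * xi m φ j) := by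
  rw [xiH_xi_self φ j, xiH_eq φ k, kron_mul, kron_mul]
  refine congrArg (kron m) (funext fun s => ?_)
  simp only [gn, fx]
  by_cases hsj : s = j
  · subst hsj
    simp [not_lt_of_gt hkj, ne_of_gt hkj]
  · simp [hsj]

lemma P_mul_M (hij : i < j) :
    ((xi m φ i)ᴴ * xi m φ i) * ((xi m φ i)ᴴ * xi m φ j) = (xi m φ i)ᴴ * xi m φ j := by
  rw [xiH_xi_self φ i, xiH_xi_lt φ hij, kron_mul]
  refine congrArg (kron m) (funext fun s => ?_)
  simp only [gn, gm]
  by_cases hsi : s = i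
  · subst hsi
    simp only [if_pos rfl, lt_irrefl, if_false]
    exact e12
  · simp [hsi]

lemma M_mul_P (hij : i < j) :
    ((xi m φ i)ᴴ * xi m φ j) * ((xi m φ i)ᴴ * xi m φ i) = 0 := by
  rw [xiH_xi_self φ i, xiH_xi_lt φ hij, kron_mul]
  refine kron_eq_zero _ i ?_
  simp only [gm, gn, lt_irrefl, if_false, if_pos rfl]
  exact e13

lemma Q_mul_M (hij : i < j) :
    ((xi m φ j)ᴴ * xi m φ j) * ((xi m φ i)ᴴ * xi m φ j) = 0 := by
  rw [xiH_xi_self φ j, xiH_xi_lt φ hij, kron_mul]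
  refine kron_eq_zero _ j ?_
  simp only [gm, gn, lt_irrefl, if_false, if_pos rfl, not_lt_of_gt hij, if_neg (ne_of_gt hij)]
  exact e14

lemma M_mul_Q (hij : i < j) :
    ((xi m φ i)ᴴ * xi m φ j) * ((xi m φ j)ᴴ * xi m φ j) = (xi m φ i)ᴴ * xi m φ j := by
  rw [xiH_xi_self φ j, xiH_xi_lt φ hij, kron_mul]
  refine congrArg (kron m) (funext fun s => ?_)
  simp only [gn, gm]
  by_cases hsj : s = j
  · subst hsj
    simp only [if_pos rfl, lt_irrefl, if_false, not_lt_of_gt hij, if_neg (ne_of_gt hij)]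
    exact e15
  · simp [hsj]

lemma P_mul_M' (hij : i < j) :
    ((xi m φ i)ᴴ * xi m φ i) * ((xi m φ j)ᴴ * xi m φ i) = 0 := by
  rw [xiH_xi_self φ i, xiH_xi_gt φ hij, kron_mul]
  refine kron_eq_zero _ i ?_
  simp only [gm', gn, lt_irrefl, if_false, if_pos rfl]
  exact e14

lemma M'_mul_P (hij : i < j) :
    ((xi m φ j)ᴴ * xi m φ i) * ((xi m φ i)ᴴ * xi m φ i) = (xi m φ j)ᴴ * xi m φ i := by
  rw [xiH_xi_self φ i, xiH_xi_gt φ hij, kron_mul]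
  refine congrArg (kron m) (funext fun s => ?_)
  simp only [gn, gm']
  by_cases hsi : s = i
  · subst hsi
    simp only [if_pos rfl, lt_irrefl, if_false]
    exact e15
  · simp [hsi]

lemma Q_mul_M' (hij : i < j) :
    ((xi m φ j)ᴴ * xi m φ j) * ((xi m φ j)ᴴ * xi m φ i) = (xi m φ j)ᴴ * xi m φ i := by
  rw [xiH_xi_self φ j, xiH_xi_gt φ hij, kron_mul]
  refine congrArg (kron m) (funext fun s => ?_)
  simp only [gn, gm']
  by_cases hsj : s = j
  · subst hsj
    simp only [if_pos rfl, lt_irrefl, if_false, not_lt_of_gt hij, if_neg (ne_of_gt hij)]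
    exact e12
  · simp [hsj]

lemma M'_mul_Q (hij : i < j) :
    ((xi m φ j)ᴴ * xi m φ i) * ((xi m φ j)ᴴ * xi m φ j) = 0 := by
  rw [xiH_xi_self φ j, xiH_xi_gt φ hij, kron_mul]
  refine kron_eq_zero _ j ?_
  simp only [gm', gn, lt_irrefl, if_false, if_pos rfl, not_lt_of_gt hij, if_neg (ne_of_gt hij)]
  exact e13

end FAaux

namespace FAaux

variable {m : ℕ} (φ : ℝ) {i k j : Fin m}

lemma j3_mul_M (hij : i < j) :
    j3 m φ i j * ((xi m φ i)ᴴ * xi m φ j) = (1/2 : ℂ) • ((xi m φ i)ᴴ * xi m φ j) := by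
  rw [j3, smul_mul_assoc, sub_mul, P_mul_M φ hij, Q_mul_M φ hij, sub_zero]

lemma M_mul_j3 (hij : i < j) :
    ((xi m φ i)ᴴ * xi m φ j) * j3 m φ i j = (-(1/2) : ℂ) • ((xi m φ i)ᴴ * xi m φ j) := by
  rw [j3, mul_smul_comm, mul_sub, M_mul_P φ hij, M_mul_Q φ hij, zero_sub, smul_neg, ← neg_smul]

lemma j3_mul_M' (hij : i < j) :
    j3 m φ i j * ((xi m φ j)ᴴ * xi m φ i) = (-(1/2) : ℂ) • ((xi m φ j)ᴴ * xi m φ i) := by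
  rw [j3, smul_mul_assoc, sub_mul, P_mul_M' φ hij, Q_mul_M' φ hij, zero_sub, smul_neg, ← neg_smul]

lemma M'_mul_j3 (hij : i < j) :
    ((xi m φ j)ᴴ * xi m φ i) * j3 m φ i j = (1/2 : ℂ) • ((xi m φ j)ᴴ * xi m φ i) := by
  rw [j3, mul_smul_comm, mul_sub, M'_mul_P φ hij, M'_mul_Q φ hij, sub_zero]

lemma j3_comm_Xk (hik : i < k) (hkj : k < j) :
    j3 m φ i j * (xi m φ k)ᴴ = (xi m φ k)ᴴ * j3 m φ i j := by
  rw [j3, smul_mul_assoc, mul_smul_comm, sub_mul, mul_sub, P_mul_Xk φ hik, Q_mul_Xk φ hkj]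

section Analytic

lemma exp_comm_of (A X B : Matrix (Fin m → Fin 2) (Fin m → Fin 2) ℂ) (h : A * X = X * B) :
    NormedSpace.exp A * X = X * NormedSpace.exp B := by
  letI : SeminormedRing (Matrix (Fin m → Fin 2) (Fin m → Fin 2) ℂ) :=
    Matrix.linftyOpSemiNormedRing
  letI : NormedRing (Matrix (Fin m → Fin 2) (Fin m → Fin 2) ℂ) := Matrix.linftyOpNormedRing
  letI : NormedAlgebra ℂ (Matrix (Fin m → Fin 2) (Fin m → Fin 2) ℂ) :=
    Matrix.linftyOpNormedAlgebra
  have hpow : ∀ n : ℕ, A ^ n * X = X * B ^ n := by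
    intro n
    induction n with
    | zero => simp
    | succ n ih => rw [pow_succ, pow_succ, mul_assoc, h, ← mul_assoc, ih, mul_assoc]
  simp only [NormedSpace.exp_eq_tsum ℂ]
  erw [← (NormedSpace.expSeries_summable' (𝕂 := ℂ) A).tsum_mul_right,
    ← (NormedSpace.expSeries_summable' (𝕂 := ℂ) B).tsum_mul_left]
  exact tsum_congr fun n => by rw [smul_mul_assoc, hpow n, mul_smul_comm]

lemma exp_smul_one (c : ℂ) :
    NormedSpace.exp (c • (1 : Matrix (Fin m → Fin 2) (Fin m → Fin 2) ℂ)) =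
      Complex.exp c • 1 := by
  letI : SeminormedRing (Matrix (Fin m → Fin 2) (Fin m → Fin 2) ℂ) :=
    Matrix.linftyOpSemiNormedRing
  letI : NormedRing (Matrix (Fin m → Fin 2) (Fin m → Fin 2) ℂ) := Matrix.linftyOpNormedRing
  letI : NormedAlgebra ℂ (Matrix (Fin m → Fin 2) (Fin m → Fin 2) ℂ) :=
    Matrix.linftyOpNormedAlgebra
  have hsum : Summable fun n : ℕ => ((n.factorial : ℂ))⁻¹ * c ^ n := by
    simpa [smul_eq_mul] using NormedSpace.expSeries_summable' (𝕂 := ℂ) (𝔸 := ℂ) c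
  simp only [NormedSpace.exp_eq_tsum ℂ]
  have h1 : ∀ n : ℕ, ((n.factorial : ℂ))⁻¹ • (c • (1 : Matrix (Fin m → Fin 2) (Fin m → Fin 2) ℂ)) ^ n
      = (((n.factorial : ℂ))⁻¹ * c ^ n) • (1 : Matrix (Fin m → Fin 2) (Fin m → Fin 2) ℂ) := by
    intro n
    rw [smul_pow, one_pow, smul_smul]
  simp only [h1]
  erw [Summable.tsum_smul_const hsum]
  congr 1
  rw [Complex.exp_eq_exp_ℂ, NormedSpace.exp_eq_tsum ℂ]
  simp [smul_eq_mul]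

end Analytic

end FAaux

namespace FAaux

variable {m : ℕ} (φ : ℝ) {i k j : Fin m}

lemma expJ_mul_M (hij : i < j) (a : ℂ) :
    NormedSpace.exp (a • j3 m φ i j) * ((xi m φ i)ᴴ * xi m φ j)
      = Complex.exp a •
        (((xi m φ i)ᴴ * xi m φ j) * NormedSpace.exp (a • j3 m φ i j)) := by
  have h : (a • j3 m φ i j) * ((xi m φ i)ᴴ * xi m φ j)
      = ((xi m φ i)ᴴ * xi m φ j) * (a • j3 m φ i j + a • 1) := by
    rw [smul_mul_assoc, j3_mul_M φ hij, mul_add, mul_smul_comm, M_mul_j3 φ hij,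
      mul_smul_comm, mul_one]
    module
  rw [exp_comm_of _ _ _ h,
    Matrix.exp_add_of_commute _ _ ((Commute.one_right (a • j3 m φ i j)).smul_right a),
    exp_smul_one, mul_smul_comm, mul_one, mul_smul_comm]

lemma expJ_mul_M' (hij : i < j) (a : ℂ) :
    NormedSpace.exp (a • j3 m φ i j) * ((xi m φ j)ᴴ * xi m φ i)
      = Complex.exp (-a) •
        (((xi m φ j)ᴴ * xi m φ i) * NormedSpace.exp (a • j3 m φ i j)) := by
  have h : (a • j3 m φ i j) * ((xi m φ j)ᴴ * xi m φ i)
      = ((xi m φ j)ᴴ * xi m φ i) * (a • j3 m φ i j + (-a) • 1) := by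
    rw [smul_mul_assoc, j3_mul_M' φ hij, mul_add, mul_smul_comm, M'_mul_j3 φ hij,
      mul_smul_comm, mul_one]
    module
  rw [exp_comm_of _ _ _ h,
    Matrix.exp_add_of_commute _ _ ((Commute.one_right (a • j3 m φ i j)).smul_right (-a)),
    exp_smul_one, mul_smul_comm, mul_one, mul_smul_comm]

end FAaux

/-- **Propagation of an intermediate-mode creation operator through a twisted beam
splitter.** For modes `i < k < j` and reals `θ, t`:
`G^t_{ij}(θ)·ξ_k† = ξ_k†·G^{t+2φ}_{ij}(θ)`. -/
theorem fermionic_anyon_intermediate_mode_propagation (m : ℕ) (φ : ℝ) (i k j : Fin m)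
    (hik : i < k) (hkj : k < j) (θ t : ℝ) :
    twistedBS m φ i j t θ * (xi m φ k)ᴴ = (xi m φ k)ᴴ * twistedBS m φ i j (t + 2 * φ) θ := by
  have hij := hik.trans hkj
  simp only [twistedBS, bs]
  have hcast : (Complex.I * ((t + 2*φ : ℝ) : ℂ)) = Complex.I * (t : ℂ) + (Complex.I * φ + Complex.I * φ) := by
    push_cast; ring
  rw [hcast]
  set X := (xi m φ k)ᴴ with hX
  set Mij := (xi m φ i)ᴴ * xi m φ j with hM
  set Mji := (xi m φ j)ᴴ * xi m φ i with hM'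
  set J := j3 m φ i j with hJdef
  set w : ℂ := Complex.I * φ + Complex.I * φ with hw
  set α : ℂ := Complex.I * (t : ℂ) with hα
  set c : ℂ := Complex.I * (θ : ℂ) with hc
  have hew : Complex.exp w = Complex.exp (Complex.I*φ) * Complex.exp (Complex.I*φ) :=
    Complex.exp_add _ _
  have hew' : Complex.exp (-w) =
      Complex.exp (-(Complex.I*φ)) * Complex.exp (-(Complex.I*φ)) := by
    rw [hw, neg_add, Complex.exp_add]
  have hMX : Mij * X = Complex.exp w • (X * Mij) := by
    rw [hew]; exact FAaux.M_mul_Xk φ hik hkj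
  have hM'X : Mji * X = Complex.exp (-w) • (X * Mji) := by
    rw [hew']; exact FAaux.M'_mul_Xk φ hik hkj
  set Y := c • (Mij + Mji) with hY
  set Y' := c • (Complex.exp w • Mij + Complex.exp (-w) • Mji) with hY'
  have h1 : Y * X = X * Y' := by
    rw [hY, hY', smul_mul_assoc, add_mul, hMX, hM'X, mul_smul_comm, mul_add,
      mul_smul_comm, mul_smul_comm]
  have hb : NormedSpace.exp Y * X = X * NormedSpace.exp Y' := FAaux.exp_comm_of _ _ _ h1
  have hJX : ∀ a : ℂ, NormedSpace.exp (a • J) * X = X * NormedSpace.exp (a • J) := fun a =>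
    FAaux.exp_comm_of _ _ _
      (by rw [smul_mul_assoc, FAaux.j3_comm_Xk φ hik hkj, mul_smul_comm])
  have hMe : Mij * NormedSpace.exp ((-w) • J) =
      Complex.exp w • (NormedSpace.exp ((-w) • J) * Mij) := by
    have h2 := congrArg (fun Z => Complex.exp w • Z) (FAaux.expJ_mul_M φ hij (-w))
    rw [smul_smul, ← Complex.exp_add, add_neg_cancel, Complex.exp_zero, one_smul] at h2
    exact h2.symm
  have hM'e : Mji * NormedSpace.exp ((-w) • J) =
      Complex.exp (-w) • (NormedSpace.exp ((-w) • J) * Mji) := by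
    have h2 := congrArg (fun Z => Complex.exp (-w) • Z) (FAaux.expJ_mul_M' φ hij (-w))
    rw [neg_neg] at h2
    rw [smul_smul, ← Complex.exp_add, neg_add_cancel, Complex.exp_zero, one_smul] at h2
    exact h2.symm
  have h3 : Y * NormedSpace.exp ((-w) • J) = NormedSpace.exp ((-w) • J) * Y' := by
    rw [hY, hY', smul_mul_assoc, add_mul, hMe, hM'e, mul_smul_comm, mul_add,
      mul_smul_comm, mul_smul_comm]
  have hbw := FAaux.exp_comm_of _ _ _ h3
  have hsplit : ∀ a b : ℂ, NormedSpace.exp ((a + b) • J) =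
      NormedSpace.exp (a • J) * NormedSpace.exp (b • J) := by
    intro a b
    rw [add_smul]
    exact Matrix.exp_add_of_commute _ _ (((Commute.refl J).smul_left a).smul_right b)
  have hinv : NormedSpace.exp (w • J) * NormedSpace.exp ((-w) • J) = 1 := by
    rw [← hsplit, add_neg_cancel, zero_smul, NormedSpace.exp_zero]
  have hkey : NormedSpace.exp (w • J) * NormedSpace.exp Y * NormedSpace.exp ((-w) • J)
      = NormedSpace.exp Y' := by
    rw [mul_assoc, hbw, ← mul_assoc, hinv, one_mul]
  have hneg : (-(α + w)) = (-w) + (-α) := by ring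
  rw [hneg, hsplit α w, hsplit (-w) (-α)]
  have hbw' : ∀ Z, NormedSpace.exp Y * (NormedSpace.exp ((-w) • J) * Z) =
      NormedSpace.exp ((-w) • J) * (NormedSpace.exp Y' * Z) := fun Z => by
    rw [← mul_assoc, hbw, mul_assoc]
  have hinv' : ∀ Z, NormedSpace.exp (w • J) * (NormedSpace.exp ((-w) • J) * Z) = Z :=
    fun Z => by rw [← mul_assoc, hinv, one_mul]
  have hb' : ∀ Z, NormedSpace.exp Y * (X * Z) = X * (NormedSpace.exp Y' * Z) := fun Z => by
    rw [← mul_assoc, hb, mul_assoc]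
  have hJX' : ∀ (a : ℂ) Z, NormedSpace.exp (a • J) * (X * Z) =
      X * (NormedSpace.exp (a • J) * Z) := fun a Z => by
    rw [← mul_assoc, hJX a, mul_assoc]
  simp only [mul_assoc]
  rw [hJX (-α), hb', hJX', hbw', hinv']
end

section
/- Take m = 3 fermionic-anyon modes on (ℂ²)^{⊗3}. For every real θ and every n ∈ {0,1}, the beam splitter between the outer modes exhibits an anyonic Aharonov–Bohm phase determined by the occupation of the intermediate mode: BS₁₃(θ)·|1, n, 0⟩ = cos θ · |1, n, 0⟩ + i·e^{−i n (φ + π)}·sin θ · |0, n, 1⟩, where BS₁₃(θ) = exp(iθ(ξ₁†ξ₃ + ξ₃†ξ₁)). -/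
open scoped BigOperators
open Matrix

/-- The tensor-product standard basis vector `|n₁,…,n_m⟩` of `(ℂ²)^{⊗m}`, with the second
basis vector of `ℂ²` representing an occupied mode. -/
noncomputable def ket {m : ℕ} (n : Fin m → Fin 2) : (Fin m → Fin 2) → ℂ :=
  Pi.single n 1

/-! ### Auxiliary lemmas -/

private lemma exp_rot {N : Type*} [Fintype N] [DecidableEq N]
    (M : Matrix N N ℂ) (v w : N → ℂ) (d : ℂ) (hd : d ≠ 0)
    (h1 : M.mulVec v = d • w) (h2 : M.mulVec w = d⁻¹ • v) (θ : ℝ) :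
    (NormedSpace.exp ((Complex.I * θ) • M)).mulVec v
      = (Real.cos θ : ℂ) • v + (Complex.I * d * Real.sin θ) • w := by
  letI : SeminormedRing (Matrix N N ℂ) := Matrix.linftyOpSemiNormedRing
  letI : NormedRing (Matrix N N ℂ) := Matrix.linftyOpNormedRing
  letI : NormedAlgebra ℂ (Matrix N N ℂ) := Matrix.linftyOpNormedAlgebra
  set A : Matrix N N ℂ := (Complex.I * θ) • M with hA
  have hpow : ∀ k : ℕ, (M ^ (2 * k)).mulVec v = v ∧ (M ^ (2 * k)).mulVec w = w := by
    intro k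
    induction k with
    | zero => simp
    | succ k ih =>
      have e : M ^ (2 * (k + 1)) = M ^ (2 * k) * M * M := by
        rw [Nat.mul_succ, pow_add, sq, ← mul_assoc]
      rw [e]
      constructor
      · rw [← Matrix.mulVec_mulVec, ← Matrix.mulVec_mulVec, h1, Matrix.mulVec_smul, h2,
          smul_smul, mul_inv_cancel₀ hd, one_smul, ih.1]
      · rw [← Matrix.mulVec_mulVec, ← Matrix.mulVec_mulVec, h2, Matrix.mulVec_smul, h1,
          smul_smul, inv_mul_cancel₀ hd, one_smul, ih.2]
  let L : Matrix N N ℂ →ₗ[ℂ] (N → ℂ) :=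
    { toFun := fun B => B.mulVec v
      map_add' := fun B C => Matrix.add_mulVec B C v
      map_smul' := fun c B => Matrix.smul_mulVec c B v }
  have hsum := (NormedSpace.exp_series_hasSum_exp' (𝕂 := ℂ) A).mapL
    (LinearMap.toContinuousLinearMap L)
  have hLexp : (LinearMap.toContinuousLinearMap L) (NormedSpace.exp A)
      = (NormedSpace.exp A).mulVec v := rfl
  replace hsum : HasSum _ ((NormedSpace.exp A).mulVec v) := hsum
  have htarget : HasSum
      (fun n : ℕ => (LinearMap.toContinuousLinearMap L) ((n.factorial⁻¹ : ℂ) • A ^ n))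
      ((Real.cos θ : ℂ) • v + (Complex.I * d * Real.sin θ) • w) := by
    refine HasSum.even_add_odd ?_ ?_
    · have hc := (Complex.hasSum_cos (θ : ℂ)).smul_const v
      rw [← Complex.ofReal_cos] at hc
      convert hc using 2 with k
      rw [_root_.map_smul]
      have hLk : (LinearMap.toContinuousLinearMap L) (A ^ (2 * k)) = (A ^ (2 * k)).mulVec v := rfl
      rw [hLk, hA, smul_pow, Matrix.smul_mulVec, (hpow k).1, smul_smul]
      congr 1
      rw [mul_pow, pow_mul, pow_mul, Complex.I_sq]
      field_simp
    · have hs := ((Complex.hasSum_sin (θ : ℂ)).mul_left (Complex.I * d)).smul_const w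
      rw [← Complex.ofReal_sin] at hs
      convert hs using 2 with k
      rw [_root_.map_smul]
      have hLk : (LinearMap.toContinuousLinearMap L) (A ^ (2 * k + 1))
          = (A ^ (2 * k + 1)).mulVec v := rfl
      have e : A ^ (2 * k + 1) = A ^ (2 * k) * A := pow_succ A (2 * k)
      have hAv : A.mulVec v = (Complex.I * θ * d) • w := by
        rw [hA, Matrix.smul_mulVec, h1, smul_smul]
      rw [hLk, e, ← Matrix.mulVec_mulVec, hAv, Matrix.mulVec_smul, hA, smul_pow,
        Matrix.smul_mulVec, (hpow k).2, smul_smul, smul_smul]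
      congr 1
      rw [mul_pow, pow_mul, pow_mul, Complex.I_sq]
      field_simp
      ring
  exact hsum.unique htarget

private lemma mulVec_ket {m : ℕ} (A : Matrix (Fin m → Fin 2) (Fin m → Fin 2) ℂ)
    (c : Fin m → Fin 2) : A.mulVec (ket c) = fun r => A r c := by
  funext r
  simp [ket, Matrix.mulVec, dotProduct, Pi.single_apply, mul_ite]

/-- The anyonic phase `e^{−i n (φ+π)}`. -/
noncomputable def dval (φ : ℝ) (n : Fin 2) : ℂ :=
  Complex.exp (-(Complex.I * (n : ℕ) * ((φ : ℂ) + Real.pi)))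

private lemma dval_zero (φ : ℝ) : dval φ 0 = 1 := by
  simp [dval]

private lemma dval_one (φ : ℝ) : dval φ 1 = -Complex.exp (-(Complex.I * φ)) := by
  rw [dval]
  push_cast [Fin.val_one]
  rw [show -(Complex.I * 1 * ((φ : ℂ) + Real.pi))
      = -(Complex.I * φ) + -(Real.pi * Complex.I) by ring,
    Complex.exp_add, Complex.exp_neg (Real.pi * Complex.I), Complex.exp_pi_mul_I]
  norm_num

private lemma dval_one_inv (φ : ℝ) : (dval φ 1)⁻¹ = -Complex.exp (Complex.I * φ) := by
  rw [dval, ← Complex.exp_neg]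
  push_cast [Fin.val_one]
  rw [show - -(Complex.I * 1 * ((φ : ℂ) + Real.pi))
      = Complex.I * φ + Real.pi * Complex.I by ring,
    Complex.exp_add, Complex.exp_pi_mul_I]
  ring

private lemma dval_ne_zero (φ : ℝ) (n : Fin 2) : dval φ n ≠ 0 := Complex.exp_ne_zero _

private lemma conj_exp_I (φ : ℝ) :
    (starRingEnd ℂ) (Complex.exp (Complex.I * φ)) = Complex.exp (-(Complex.I * φ)) := by
  rw [← Complex.exp_conj, _root_.map_mul, Complex.conj_I, Complex.conj_ofReal, neg_mul]

/-! ### Column computations -/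

private lemma X3_v (φ : ℝ) (n : Fin 2) : (xi 3 φ 2).mulVec (ket ![1, n, 0]) = 0 := by
  rw [mulVec_ket]
  funext r
  obtain ⟨a, b, c, rfl⟩ : ∃ a b c, r = ![a, b, c] :=
    ⟨r 0, r 1, r 2, by funext i; fin_cases i <;> rfl⟩
  simp [xi, Fin.prod_univ_three, sigMat, dMat]
  fin_cases c <;> simp

private lemma X1_v (φ : ℝ) (n : Fin 2) :
    (xi 3 φ 0).mulVec (ket ![1, n, 0]) = ket ![0, n, 0] := by
  rw [mulVec_ket]
  funext r
  obtain ⟨a, b, c, rfl⟩ : ∃ a b c, r = ![a, b, c] :=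
    ⟨r 0, r 1, r 2, by funext i; fin_cases i <;> rfl⟩
  fin_cases n <;> fin_cases a <;> fin_cases b <;> fin_cases c <;>
    simp [xi, Fin.prod_univ_three, sigMat, dMat, ket, Pi.single_apply] <;>
    simp (config := { decide := true })

private lemma X3d_u (φ : ℝ) (n : Fin 2) :
    ((xi 3 φ 2)ᴴ).mulVec (ket ![0, n, 0]) = dval φ n • ket ![0, n, 1] := by
  rw [mulVec_ket]
  funext r
  obtain ⟨a, b, c, rfl⟩ : ∃ a b c, r = ![a, b, c] :=
    ⟨r 0, r 1, r 2, by funext i; fin_cases i <;> rfl⟩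
  fin_cases n <;> fin_cases a <;> fin_cases b <;> fin_cases c <;>
    simp [xi, Fin.prod_univ_three, sigMat, dMat, ket, Pi.single_apply, dval_zero, dval_one,
      Matrix.conjTranspose_apply, conj_exp_I] <;>
    simp (config := { decide := true })

private lemma X1_w (φ : ℝ) (n : Fin 2) : (xi 3 φ 0).mulVec (ket ![0, n, 1]) = 0 := by
  rw [mulVec_ket]
  funext r
  obtain ⟨a, b, c, rfl⟩ : ∃ a b c, r = ![a, b, c] :=
    ⟨r 0, r 1, r 2, by funext i; fin_cases i <;> rfl⟩
  simp [xi, Fin.prod_univ_three, sigMat, dMat]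
  fin_cases a <;> fin_cases b <;> fin_cases c <;> fin_cases n <;> rfl

private lemma X3_w (φ : ℝ) (n : Fin 2) :
    (xi 3 φ 2).mulVec (ket ![0, n, 1]) = (dval φ n)⁻¹ • ket ![0, n, 0] := by
  rw [mulVec_ket]
  funext r
  obtain ⟨a, b, c, rfl⟩ : ∃ a b c, r = ![a, b, c] :=
    ⟨r 0, r 1, r 2, by funext i; fin_cases i <;> rfl⟩
  fin_cases n <;> fin_cases a <;> fin_cases b <;> fin_cases c <;>
    simp [xi, Fin.prod_univ_three, sigMat, dMat, ket, Pi.single_apply, dval_zero, dval_one_inv] <;>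
    simp (config := { decide := true })

private lemma X1d_u (φ : ℝ) (n : Fin 2) :
    ((xi 3 φ 0)ᴴ).mulVec (ket ![0, n, 0]) = ket ![1, n, 0] := by
  rw [mulVec_ket]
  funext r
  obtain ⟨a, b, c, rfl⟩ : ∃ a b c, r = ![a, b, c] :=
    ⟨r 0, r 1, r 2, by funext i; fin_cases i <;> rfl⟩
  fin_cases n <;> fin_cases a <;> fin_cases b <;> fin_cases c <;>
    simp [xi, Fin.prod_univ_three, sigMat, dMat, ket, Pi.single_apply,
      Matrix.conjTranspose_apply] <;>
    simp (config := { decide := true })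

/-- **Anyonic Aharonov–Bohm effect for a beam splitter between the outer of three
fermionic-anyon modes.** For every real `θ` and occupation `n ∈ {0,1}` of the middle
mode: `BS₁₃(θ)·|1,n,0⟩ = cos θ·|1,n,0⟩ + i·e^{−in(φ+π)}·sin θ·|0,n,1⟩`. -/
theorem fermionic_anyon_aharonov_bohm (φ : ℝ) (θ : ℝ) (n : Fin 2) :
    (NormedSpace.exp ((Complex.I * θ) •
        ((xi 3 φ 0)ᴴ * xi 3 φ 2 + (xi 3 φ 2)ᴴ * xi 3 φ 0))).mulVec (ket ![1, n, 0])
      = ((Real.cos θ : ℂ)) • ket ![1, n, 0]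
        + (Complex.I * Complex.exp (-(Complex.I * (n : ℕ) * ((φ : ℂ) + Real.pi)))
            * Real.sin θ) • ket ![0, n, 1] := by
  set M : Matrix (Fin 3 → Fin 2) (Fin 3 → Fin 2) ℂ :=
    (xi 3 φ 0)ᴴ * xi 3 φ 2 + (xi 3 φ 2)ᴴ * xi 3 φ 0 with hM
  have h1 : M.mulVec (ket ![1, n, 0]) = dval φ n • ket ![0, n, 1] := by
    rw [hM, Matrix.add_mulVec, ← Matrix.mulVec_mulVec, ← Matrix.mulVec_mulVec,
      X3_v, X1_v, Matrix.mulVec_zero, X3d_u, zero_add]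
  have h2 : M.mulVec (ket ![0, n, 1]) = (dval φ n)⁻¹ • ket ![1, n, 0] := by
    rw [hM, Matrix.add_mulVec, ← Matrix.mulVec_mulVec, ← Matrix.mulVec_mulVec,
      X1_w, X3_w, Matrix.mulVec_zero, Matrix.mulVec_smul, X1d_u, add_zero]
  exact exp_rot M _ _ (dval φ n) (dval_ne_zero φ n) h1 h2 θ
end

section
/- Take m = 2 fermionic-anyon modes on (ℂ²)^{⊗2} ≅ ℂ⁴. For every real θ, the beam splitter BS₁₂(θ) = exp(iθ(ξ₁†ξ₂ + ξ₂†ξ₁)) leaves the doubly occupied state invariant: BS₁₂(θ)·|1, 1⟩ = |1, 1⟩. (Fermionic anyons obey the Pauli exclusion principle under beam splitters for every value of the statistical parameter φ.) -/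
open scoped BigOperators
open Matrix

/-- If `M` kills `v`, then so does every positive power; hence `exp M` fixes `v`. -/
lemma exp_mulVec_eq_self {n : Type*} [Fintype n] [DecidableEq n]
    (M : Matrix n n ℂ) (v : n → ℂ) (h : M.mulVec v = 0) :
    (NormedSpace.exp M).mulVec v = v := by
  letI : SeminormedRing (Matrix n n ℂ) := Matrix.linftyOpSemiNormedRing
  letI : NormedRing (Matrix n n ℂ) := Matrix.linftyOpNormedRing
  letI : NormedAlgebra ℂ (Matrix n n ℂ) := Matrix.linftyOpNormedAlgebra
  let L : Matrix n n ℂ →ₗ[ℂ] (n → ℂ) :=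
    { toFun := fun A => A.mulVec v
      map_add' := fun A B => Matrix.add_mulVec A B v
      map_smul' := fun c A => Matrix.smul_mulVec c A v }
  let Lc : Matrix n n ℂ →L[ℂ] (n → ℂ) := L.toContinuousLinearMap
  have hpow : ∀ k : ℕ, (M ^ (k + 1)).mulVec v = 0 := by
    intro k
    rw [pow_succ, ← Matrix.mulVec_mulVec, h, Matrix.mulVec_zero]
  have key : (NormedSpace.exp M).mulVec v = Lc (NormedSpace.exp M) := rfl
  rw [key, NormedSpace.exp_eq_tsum ℂ,
    Lc.map_tsum (NormedSpace.expSeries_summable' (𝕂 := ℂ) M)]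
  rw [tsum_eq_single 0]
  · show (((Nat.factorial 0 : ℂ))⁻¹ • (M ^ 0)).mulVec v = v
    simp [Matrix.smul_mulVec, Matrix.one_mulVec]
  · intro b hb
    obtain ⟨k, rfl⟩ := Nat.exists_eq_succ_of_ne_zero hb
    show (((Nat.factorial (k+1) : ℂ))⁻¹ • (M ^ (k+1))).mulVec v = 0
    rw [Matrix.smul_mulVec, hpow, smul_zero]

/-- The beam-splitter generator annihilates the doubly occupied state `|1,1⟩`. -/
lemma generator_kills_ket (φ : ℝ) :
    ((xi 2 φ 0)ᴴ * xi 2 φ 1 + (xi 2 φ 1)ᴴ * xi 2 φ 0).mulVec (ket ![1, 1]) = 0 := by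
  funext r
  simp only [ket, Matrix.mulVec_single_one, Matrix.col_apply, mul_one, Matrix.add_apply, Matrix.mul_apply,
    Matrix.conjTranspose_apply, xi, Matrix.of_apply, Fin.prod_univ_two, Pi.zero_apply]
  rw [← Finset.sum_add_distrib]
  apply Finset.sum_eq_zero
  intro x _
  have h0 : x 0 = 0 ∨ x 0 = 1 := by omega
  have h1 : x 1 = 0 ∨ x 1 = 1 := by omega
  have g0 : r 0 = 0 ∨ r 0 = 1 := by omega
  have g1 : r 1 = 0 ∨ r 1 = 1 := by omega
  rcases h0 with h0 | h0 <;> rcases h1 with h1 | h1 <;>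
  rcases g0 with g0 | g0 <;> rcases g1 with g1 | g1 <;>
    simp [h0, h1, g0, g1, sigMat, dMat]

/-- **Pauli exclusion principle for fermionic anyons under beam splitters.** On two
fermionic-anyon modes, for every real `θ`, the beam splitter
`BS₁₂(θ) = exp(iθ(ξ₁†ξ₂ + ξ₂†ξ₁))` leaves the doubly occupied state invariant:
`BS₁₂(θ)·|1,1⟩ = |1,1⟩`, for every value of the statistical parameter `φ`. -/
theorem fermionic_anyon_pauli_exclusion (φ : ℝ) (θ : ℝ) :
    (NormedSpace.exp ((Complex.I * θ) •
        ((xi 2 φ 0)ᴴ * xi 2 φ 1 + (xi 2 φ 1)ᴴ * xi 2 φ 0))).mulVec (ket ![1, 1])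
      = ket ![1, 1] := by
  apply exp_mulVec_eq_self
  rw [Matrix.smul_mulVec, generator_kills_ket, smul_zero]
end

section
/- For every complex number u, the power series identity ∑_{k=0}^{∞} (−1)^{k(k−1)/2} · u^k / k! = (1/√2)·( e^{iπ/4}·e^{−iu} + e^{−iπ/4}·e^{iu} ) holds; equivalently, for every natural number k, (−1)^{k(k−1)/2} = (1/√2)·( e^{iπ/4}·(−i)^k + e^{−iπ/4}·i^k ). (This is the statement that at statistical parameter φ = π an anyonic mirror maps a single-mode coherent state of amplitude u, whose Fock coefficients are multiplied by the phases e^{−iφ·k(k−1)/2}, into the cat state (1/√2)·( e^{iπ/4}·|−iu⟩ + e^{−iπ/4}·|iu⟩ ).) -/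
lemma sqrt_two_sq : (Real.sqrt 2 : ℂ) * (Real.sqrt 2 : ℂ) = 2 := by
  norm_cast
  rw [Real.mul_self_sqrt (by norm_num)]

lemma sqrt_two_ne_zero : (Real.sqrt 2 : ℂ) ≠ 0 := by
  intro h
  have := sqrt_two_sq
  rw [h, mul_zero] at this
  norm_num at this

lemma exp_pi_div_four_eq : Complex.exp (Complex.I * Real.pi / 4)
    = (1 + Complex.I) / Real.sqrt 2 := by
  have h2 := sqrt_two_sq
  have hne := sqrt_two_ne_zero
  have harg : Complex.I * (Real.pi : ℂ) / 4 = ((Real.pi / 4 : ℝ) : ℂ) * Complex.I := by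
    push_cast; ring
  rw [harg, Complex.exp_mul_I, ← Complex.ofReal_cos, ← Complex.ofReal_sin,
    Real.cos_pi_div_four, Real.sin_pi_div_four]
  field_simp
  push_cast
  linear_combination (1 + Complex.I) / 2 * h2

lemma exp_neg_pi_div_four_eq : Complex.exp (-(Complex.I * Real.pi / 4))
    = (1 - Complex.I) / Real.sqrt 2 := by
  have h2 := sqrt_two_sq
  have hne := sqrt_two_ne_zero
  have harg : -(Complex.I * (Real.pi : ℂ) / 4) = ((-(Real.pi / 4) : ℝ) : ℂ) * Complex.I := by
    push_cast; ring
  rw [harg, Complex.exp_mul_I, ← Complex.ofReal_cos, ← Complex.ofReal_sin,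
    Real.cos_neg, Real.sin_neg, Real.cos_pi_div_four, Real.sin_pi_div_four]
  push_cast
  field_simp
  linear_combination (1 - Complex.I) * h2

lemma coeff_helper (a b : ℂ) :
    (1 / (Real.sqrt 2 : ℂ)) * ((1 + Complex.I) / Real.sqrt 2 * a
      + (1 - Complex.I) / Real.sqrt 2 * b)
    = ((1 + Complex.I) * a + (1 - Complex.I) * b) / 2 := by
  have h2 := sqrt_two_sq
  have hne := sqrt_two_ne_zero
  field_simp
  linear_combination -(((1 + Complex.I) * a + (1 - Complex.I) * b)) * sqrt_two_sq

lemma exponent_step (k : ℕ) :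
    (-1 : ℂ) ^ ((k + 4) * (k + 4 - 1) / 2) = (-1 : ℂ) ^ (k * (k - 1) / 2) := by
  obtain ⟨m, hm⟩ := Nat.even_mul_pred_self k
  have hdiv : k * (k - 1) / 2 = m := by omega
  have hbig : (k + 4) * (k + 4 - 1) = 2 * (m + 4 * k + 6) := by
    rcases k with _ | n
    · simp at hm; omega
    · have h1 : (n + 1 + 4) * (n + 1 + 4 - 1) = (n + 1) * (n + 1 - 1) + 8 * n + 20 := by
        have e1 : n + 1 + 4 - 1 = n + 4 := rfl
        have e2 : n + 1 - 1 = n := rfl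
        rw [e1, e2]; ring
      omega
  have hdiv2 : (k + 4) * (k + 4 - 1) / 2 = m + 4 * k + 6 := by omega
  rw [hdiv, hdiv2]
  have : m + 4 * k + 6 = m + 2 * (2 * k + 3) := by ring
  rw [this, pow_add, pow_mul]
  norm_num

lemma scalar_identity (k : ℕ) : (-1 : ℂ) ^ (k * (k - 1) / 2)
    = (1 / (Real.sqrt 2 : ℂ)) *
        (Complex.exp (Complex.I * Real.pi / 4) * (-Complex.I) ^ k
          + Complex.exp (-(Complex.I * Real.pi / 4)) * Complex.I ^ k) := by
  rw [exp_pi_div_four_eq, exp_neg_pi_div_four_eq, coeff_helper]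
  induction k using Nat.strong_induction_on with
  | _ k ih =>
    match k with
    | 0 =>
      show (-1 : ℂ) ^ 0 = ((1 + Complex.I) * (-Complex.I) ^ 0 + (1 - Complex.I) * Complex.I ^ 0) / 2
      ring
    | 1 =>
      show (-1 : ℂ) ^ 0 = ((1 + Complex.I) * (-Complex.I) ^ 1 + (1 - Complex.I) * Complex.I ^ 1) / 2
      linear_combination Complex.I_sq
    | 2 =>
      show (-1 : ℂ) ^ 1 = ((1 + Complex.I) * (-Complex.I) ^ 2 + (1 - Complex.I) * Complex.I ^ 2) / 2
      linear_combination (-1 : ℂ) * Complex.I_sq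
    | 3 =>
      show (-1 : ℂ) ^ 3 = ((1 + Complex.I) * (-Complex.I) ^ 3 + (1 - Complex.I) * Complex.I ^ 3) / 2
      linear_combination (Complex.I ^ 2 - 1) * Complex.I_sq
    | (n + 4) =>
      have hI4 : Complex.I ^ (n + 4) = Complex.I ^ n := by
        rw [pow_add, Complex.I_pow_four, mul_one]
      have hnI4 : (-Complex.I) ^ (n + 4) = (-Complex.I) ^ n := by
        rw [pow_add]
        have h4 : (-Complex.I) ^ 4 = 1 := by
          rw [Even.neg_pow ⟨2, rfl⟩, Complex.I_pow_four]
        rw [h4, mul_one]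
      rw [exponent_step n, hI4, hnI4]
      exact ih n (by omega)

/-- **Cat-state decomposition of an anyonic mirror output at `φ = π`.**
For every complex `u`, `∑_{k=0}^{∞} (−1)^{k(k−1)/2}·u^k/k! =
(1/√2)·(e^{iπ/4}·e^{−iu} + e^{−iπ/4}·e^{iu})`; equivalently, for every natural `k`,
`(−1)^{k(k−1)/2} = (1/√2)·(e^{iπ/4}·(−i)^k + e^{−iπ/4}·i^k)`. -/
theorem anyonic_mirror_cat_state :
    (∀ u : ℂ, ∑' k : ℕ, (-1 : ℂ) ^ (k * (k - 1) / 2) * u ^ k / (Nat.factorial k)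
      = (1 / (Real.sqrt 2 : ℂ)) *
          (Complex.exp (Complex.I * Real.pi / 4) * Complex.exp (-(Complex.I * u))
            + Complex.exp (-(Complex.I * Real.pi / 4)) * Complex.exp (Complex.I * u))) ∧
    (∀ k : ℕ, (-1 : ℂ) ^ (k * (k - 1) / 2)
      = (1 / (Real.sqrt 2 : ℂ)) *
          (Complex.exp (Complex.I * Real.pi / 4) * (-Complex.I) ^ k
            + Complex.exp (-(Complex.I * Real.pi / 4)) * Complex.I ^ k)) := by
  refine ⟨fun u => ?_, scalar_identity⟩
  set c₁ := Complex.exp (Complex.I * Real.pi / 4) with hc₁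
  set c₂ := Complex.exp (-(Complex.I * Real.pi / 4)) with hc₂
  have hterm : ∀ k : ℕ, (-1 : ℂ) ^ (k * (k - 1) / 2) * u ^ k / (Nat.factorial k)
      = (1 / (Real.sqrt 2 : ℂ)) *
          (c₁ * ((-(Complex.I * u)) ^ k / (Nat.factorial k))
            + c₂ * ((Complex.I * u) ^ k / (Nat.factorial k))) := by
    intro k
    rw [scalar_identity k]
    have hneg : (-(Complex.I * u)) = (-Complex.I) * u := by ring
    rw [hneg, mul_pow, mul_pow]
    ring
  rw [tsum_congr hterm]
  have hs1 : Summable fun k : ℕ => c₁ * ((-(Complex.I * u)) ^ k / (Nat.factorial k)) :=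
    (NormedSpace.expSeries_div_summable (-(Complex.I * u))).mul_left c₁
  have hs2 : Summable fun k : ℕ => c₂ * ((Complex.I * u) ^ k / (Nat.factorial k)) :=
    (NormedSpace.expSeries_div_summable (Complex.I * u)).mul_left c₂
  rw [tsum_mul_left, Summable.tsum_add hs1 hs2, tsum_mul_left, tsum_mul_left]
  have hexp : ∀ z : ℂ, ∑' k : ℕ, z ^ k / (Nat.factorial k) = Complex.exp z := by
    intro z
    rw [Complex.exp_eq_exp_ℂ, NormedSpace.exp_eq_tsum_div]
  rw [hexp, hexp]
end
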